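/- arXiv:1704.06981 — 6 statements merged into one kernel-verified Lean document; each statement's English description precedes it below -/
import Mathlib

section
/- For every integer m ≥ 0 and complex a, b, z with |z| < 1, z ≠ 0, one has (a−m)_m · (b−m)_m · 𝐅(a, b; 1+m; z) = z^{-m} · 𝐅(a−m, b−m; 1−m; z). -/
open Complex

/-- Pochhammer symbol `(a)ₙ = a(a+1)⋯(a+n−1)`. -/
noncomputable def poch (a : ℂ) (n : ℕ) : ℂ := (ascPochhammer ℂ n).eval a

/-- The normalized ₂F₁ (Gauss hypergeometric) function
`𝐅(a, b; c; z) = ∑ (a)ₙ(b)ₙ zⁿ/(Γ(c+n)·n!)`, convergent for `|z| < 1`. -/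
noncomputable def nF2 (a b c z : ℂ) : ℂ :=
  ∑' n : ℕ, poch a n * poch b n * z ^ n / (Complex.Gamma (c + n) * n.factorial)

lemma poch_add (x : ℂ) (n k : ℕ) : poch x (n + k) = poch x n * poch (x + n) k := by
  simp only [poch, ← ascPochhammer_mul, Polynomial.eval_mul, Polynomial.eval_comp,
    Polynomial.eval_add, Polynomial.eval_X, Polynomial.eval_natCast]

theorem nF2_degenerate (m : ℕ) (a b z : ℂ) (hz1 : ‖z‖ < 1) (hz0 : z ≠ 0) :
    poch (a - m) m * poch (b - m) m * nF2 a b (1 + m) z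
      = z ^ (-(m : ℤ)) * nF2 (a - m) (b - m) (1 - m) z := by
  set F : ℕ → ℂ := fun n =>
    poch (a - m) n * poch (b - m) n * z ^ n / (Complex.Gamma (1 - m + n) * n.factorial)
  have hshift : (∑' k : ℕ, F (m + k)) = ∑' n : ℕ, F n := by
    apply Function.Injective.tsum_eq (g := fun k => m + k) (add_right_injective m)
    rw [Function.support_subset_iff']
    intro n hn
    simp only [Set.mem_range, not_exists] at hn
    have hnm : n < m := by by_contra h; exact hn (n - m) (by omega)
    have : (1 : ℂ) - m + n = -((m - 1 - n : ℕ) : ℂ) := by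
      push_cast [Nat.cast_sub (by omega : n ≤ m - 1), Nat.cast_sub (by omega : 1 ≤ m)]
      ring
    simp only [F, this, Complex.Gamma_neg_nat_eq_zero, zero_mul, div_zero]
  rw [nF2, nF2, ← hshift, ← tsum_mul_left, ← tsum_mul_left]
  refine tsum_congr fun k => ?_
  have h1 : (1 : ℂ) + m + k = ((m + k : ℕ) : ℂ) + 1 := by push_cast; ring
  have h2 : (1 : ℂ) - m + (m + k : ℕ) = (k : ℂ) + 1 := by push_cast; ring
  simp only [F, h2, Complex.Gamma_nat_eq_factorial, h1, poch_add, sub_add_cancel]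
  have hzm : z ^ (-(m : ℤ)) = (z ^ m)⁻¹ := by
    rw [zpow_neg, zpow_natCast]
  rw [hzm, pow_add]
  have hm : (z : ℂ) ^ m ≠ 0 := pow_ne_zero _ hz0
  field_simp
end

section
/- For integers m ≥ 0, the function 𝐃_m(z) := ∑_{k=1}^m (−1)^{k−1} (k−1)!/(m−k)! · z^{−k} − ∑_{k=0}^∞ (ψ(k+1)+ψ(k+m+1))/(k!(m+k)!) · z^k satisfies the inhomogeneous equation z·𝐃_m''(z) + (m+1)·𝐃_m'(z) − 𝐃_m(z) = −(m/z)·𝐅_m(z) − 2·𝐅_m'(z) for z ≠ 0. -/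
open Complex

/-- The digamma function `ψ = Γ'/Γ`. -/
noncomputable def digamma (z : ℂ) : ℂ := deriv Complex.Gamma z / Complex.Gamma z

/-- The normalized ₀F₁ function with integer parameter: `𝐅_m(z) = ∑ zⁿ/((m+n)!·n!)`. -/
noncomputable def Fm (m : ℕ) (z : ℂ) : ℂ :=
  ∑' n : ℕ, z ^ n / ((m + n).factorial * n.factorial)

/-- `𝐃_m(z) = ∑_{k=1}^m (−1)^{k−1}(k−1)!/(m−k)!·z^{−k}
      − ∑_{k≥0} (ψ(k+1)+ψ(k+m+1))/(k!(m+k)!)·z^k`. -/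
noncomputable def Dm (m : ℕ) (z : ℂ) : ℂ :=
  (∑ k ∈ Finset.Icc 1 m,
      (-1 : ℂ) ^ (k - 1) * (k - 1).factorial / (m - k).factorial * z ^ (-(k : ℤ)))
  - ∑' k : ℕ, (_root_.digamma (k + 1) + _root_.digamma (k + m + 1)) / (k.factorial * (m + k).factorial) * z ^ k

/-! ### Auxiliary cast lemmas -/

lemma natc_add_one_ne_zero (n : ℕ) : ((n : ℂ) + 1) ≠ 0 := by
  have : (((n + 1 : ℕ)) : ℂ) ≠ 0 := Nat.cast_ne_zero.mpr n.succ_ne_zero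
  simpa [Nat.cast_add] using this

lemma natc_ne_neg (n : ℕ) : ∀ j : ℕ, ((n : ℂ) + 1) ≠ -j := by
  intro j h
  have h2 : ((n : ℝ) + 1) = -j := by
    have := congrArg Complex.re h
    simpa using this
  have := Nat.cast_nonneg (α := ℝ) j
  have := Nat.cast_nonneg (α := ℝ) n
  linarith

/-! ### Digamma at naturals -/

noncomputable def dg (n : ℕ) : ℂ := _root_.digamma ((n : ℂ) + 1)

lemma digamma_add_one (x : ℂ) (hx : ∀ j : ℕ, x ≠ -j) (hx0 : x ≠ 0) :
    _root_.digamma (x + 1) = _root_.digamma x + 1 / x := by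
  have hdiff : DifferentiableAt ℂ Complex.Gamma x := Complex.differentiableAt_Gamma x hx
  have hGne : Complex.Gamma x ≠ 0 := Complex.Gamma_ne_zero hx
  have key : deriv Complex.Gamma (x + 1) = Complex.Gamma x + x * deriv Complex.Gamma x := by
    have h1 : deriv (fun w => Complex.Gamma (w + 1)) x = deriv Complex.Gamma (x + 1) :=
      deriv_comp_add_const _ _ _
    have h2 : (fun w => Complex.Gamma (w + 1)) =ᶠ[nhds x] fun w => w * Complex.Gamma w := by
      filter_upwards [eventually_ne_nhds hx0] with w hw
      exact Complex.Gamma_add_one w hw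
    have h4 : HasDerivAt (fun w => w * Complex.Gamma w)
        (Complex.Gamma x + x * deriv Complex.Gamma x) x := by
      simpa [add_comm] using (hasDerivAt_id' x).fun_mul hdiff.hasDerivAt
    rw [← h1, h2.deriv_eq, h4.deriv]
  rw [_root_.digamma, _root_.digamma, key, Complex.Gamma_add_one x hx0]
  field_simp
  ring

lemma dg_succ (n : ℕ) : dg (n + 1) = dg n + 1 / ((n : ℂ) + 1) := by
  have h := digamma_add_one ((n : ℂ) + 1) (natc_ne_neg n) (natc_add_one_ne_zero n)
  have e : (((n + 1 : ℕ)) : ℂ) + 1 = ((n : ℂ) + 1) + 1 := by push_cast; ring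
  rw [dg, dg, e, h]

lemma dg_bound (n : ℕ) : ‖dg n‖ ≤ ‖dg 0‖ + n := by
  induction n with
  | zero => simp
  | succ n ih =>
    rw [dg_succ]
    have h1 : ‖(1 : ℂ) / ((n : ℂ) + 1)‖ ≤ 1 := by
      rw [norm_div, norm_one]
      have : ((n : ℂ) + 1) = ((n + 1 : ℕ) : ℂ) := by push_cast; ring
      rw [this, Complex.norm_natCast]
      rw [div_le_one (by positivity : (0:ℝ) < ((n + 1 : ℕ) : ℝ))]
      exact_mod_cast Nat.one_le_iff_ne_zero.mpr n.succ_ne_zero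
    calc ‖dg n + 1 / ((n : ℂ) + 1)‖ ≤ ‖dg n‖ + ‖(1:ℂ) / ((n : ℂ) + 1)‖ := norm_add_le _ _
      _ ≤ (‖dg 0‖ + n) + 1 := add_le_add ih h1
      _ = ‖dg 0‖ + (n + 1 : ℕ) := by push_cast; ring

/-! ### Majorization machinery for entire power series -/

def Maj (a : ℕ → ℂ) (C r : ℝ) : Prop :=
  0 ≤ C ∧ 1 ≤ r ∧ ∀ n, ‖a n‖ ≤ C * r ^ n / n.factorial

lemma nat_le_two_pow (n : ℕ) : (n : ℝ) ≤ 2 ^ n := by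
  have : n < 2 ^ n := Nat.lt_two_pow_self
  exact_mod_cast this.le

lemma Maj.summable_aux {a : ℕ → ℂ} {C r : ℝ} (h : Maj a C r) :
    Summable (fun n => C * r ^ n / n.factorial) := by
  simpa [mul_div_assoc] using (Real.summable_pow_div_factorial r).mul_left C

lemma Maj.summable {a : ℕ → ℂ} {C r : ℝ} (h : Maj a C r) (z : ℂ) :
    Summable fun n => a n * z ^ n := by
  obtain ⟨hC, hr, ha⟩ := h
  have hr0 : (0:ℝ) ≤ r := zero_le_one.trans hr
  apply Summable.of_norm_bounded (g := fun n => C * (r * (‖z‖ + 1)) ^ n / n.factorial)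
  · simpa [mul_div_assoc] using (Real.summable_pow_div_factorial (r * (‖z‖ + 1))).mul_left C
  · intro n
    rw [norm_mul, norm_pow]
    calc ‖a n‖ * ‖z‖ ^ n ≤ (C * r ^ n / n.factorial) * (‖z‖ + 1) ^ n := by
          apply mul_le_mul (ha n) (pow_le_pow_left₀ (norm_nonneg z) (by linarith) n)
            (by positivity) (by positivity)
      _ = C * (r * (‖z‖ + 1)) ^ n / n.factorial := by rw [mul_pow]; ring
  
lemma Maj.shift {a : ℕ → ℂ} {C r : ℝ} (h : Maj a C r) :
    Maj (fun n => ((n : ℂ) + 1) * a (n + 1)) (C * r) r := by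
  obtain ⟨hC, hr, ha⟩ := h
  have hr0 : (0:ℝ) ≤ r := zero_le_one.trans hr
  refine ⟨by positivity, hr, fun n => ?_⟩
  rw [norm_mul]
  have hn : ‖((n : ℂ) + 1)‖ = (n : ℝ) + 1 := by
    have : ((n : ℂ) + 1) = ((n + 1 : ℕ) : ℂ) := by push_cast; ring
    rw [this, Complex.norm_natCast]; push_cast; ring
  rw [hn]
  calc ((n : ℝ) + 1) * ‖a (n + 1)‖ ≤ ((n : ℝ) + 1) * (C * r ^ (n + 1) / (n + 1).factorial) := by
        apply mul_le_mul_of_nonneg_left (ha (n + 1)) (by positivity)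
    _ = C * r * r ^ n / n.factorial := by
        rw [Nat.factorial_succ]
        have h1 : ((n:ℝ) + 1) ≠ 0 := by positivity
        have h2 : ((n.factorial : ℝ)) ≠ 0 := Nat.cast_ne_zero.mpr n.factorial_ne_zero
        push_cast
        field_simp
        ring

lemma Maj.mul_nat {a : ℕ → ℂ} {C r : ℝ} (h : Maj a C r) :
    Maj (fun n => (n : ℂ) * a n) C (2 * r) := by
  obtain ⟨hC, hr, ha⟩ := h
  have hr0 : (0:ℝ) ≤ r := zero_le_one.trans hr
  refine ⟨hC, by linarith, fun n => ?_⟩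
  rw [norm_mul, Complex.norm_natCast]
  calc (n : ℝ) * ‖a n‖ ≤ (2:ℝ) ^ n * (C * r ^ n / n.factorial) := by
        apply mul_le_mul (by exact_mod_cast nat_le_two_pow n) (ha n) (norm_nonneg _)
          (by positivity)
    _ = C * (2 * r) ^ n / n.factorial := by rw [mul_pow]; ring

lemma Maj.const_mul {a : ℕ → ℂ} {C r : ℝ} (h : Maj a C r) (c : ℂ) :
    Maj (fun n => c * a n) (‖c‖ * C) r := by
  obtain ⟨hC, hr, ha⟩ := h
  refine ⟨by positivity, hr, fun n => ?_⟩
  rw [norm_mul]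
  calc ‖c‖ * ‖a n‖ ≤ ‖c‖ * (C * r ^ n / n.factorial) :=
        mul_le_mul_of_nonneg_left (ha n) (norm_nonneg c)
    _ = ‖c‖ * C * r ^ n / n.factorial := by ring

lemma Maj.hasDerivAt {a : ℕ → ℂ} {C r : ℝ} (h : Maj a C r) (z : ℂ) :
    HasDerivAt (fun w => ∑' n : ℕ, a n * w ^ n)
      (∑' n : ℕ, ((n : ℂ) + 1) * a (n + 1) * z ^ n) z := by
  obtain ⟨hC, hr, ha⟩ := h
  have hr0 : (0:ℝ) ≤ r := zero_le_one.trans hr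
  set R : ℝ := ‖z‖ + 1 with hRdef
  have hR1 : 1 ≤ R := by have := norm_nonneg z; simp only [hRdef]; linarith
  have hR0 : 0 ≤ R := zero_le_one.trans hR1
  have hzR : z ∈ Metric.ball (0 : ℂ) R := by
    rw [Metric.mem_ball, dist_zero_right]; simp only [hRdef]; linarith
  have hbound : ∀ (n : ℕ) (y : ℂ), y ∈ Metric.ball (0 : ℂ) R →
      ‖a n * ((n : ℂ) * y ^ (n - 1))‖ ≤ C * (2 * r * R) ^ n / n.factorial := by
    intro n y hy
    have hyR : ‖y‖ ≤ R := by
      rw [Metric.mem_ball, dist_zero_right] at hy; exact hy.le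
    have hy0 : 0 ≤ ‖y‖ := norm_nonneg y
    rw [norm_mul, norm_mul, norm_pow, Complex.norm_natCast]
    have h1 : (n : ℝ) ≤ 2 ^ n := nat_le_two_pow n
    have h2 : ‖y‖ ^ (n - 1) ≤ R ^ n :=
      le_trans (pow_le_pow_left₀ hy0 hyR _) (pow_le_pow_right₀ hR1 (Nat.sub_le n 1))
    calc ‖a n‖ * ((n:ℝ) * ‖y‖ ^ (n - 1))
        ≤ (C * r ^ n / n.factorial) * (2 ^ n * R ^ n) := by
          apply mul_le_mul (ha n) ?_ (by positivity) (by positivity)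
          apply mul_le_mul h1 h2 (by positivity) (by positivity)
      _ = C * (2 * r * R) ^ n / n.factorial := by
          rw [mul_pow, mul_pow]; ring
  have hu : Summable (fun n => C * (2 * r * R) ^ n / n.factorial) := by
    simpa [mul_div_assoc] using (Real.summable_pow_div_factorial (2 * r * R)).mul_left C
  have H : HasDerivAt (fun w => ∑' n : ℕ, a n * w ^ n)
      (∑' n : ℕ, a n * ((n : ℂ) * z ^ (n - 1))) z := by
    apply hasDerivAt_tsum_of_isPreconnected hu Metric.isOpen_ball
      (convex_ball (0:ℂ) R).isPreconnected
      (fun n y _ => (hasDerivAt_pow n y).const_mul (a n))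
      hbound hzR (Maj.summable ⟨hC, hr, ha⟩ z) hzR
  convert H using 1
  have hs : Summable (fun n => a n * ((n : ℂ) * z ^ (n - 1))) :=
    Summable.of_norm_bounded hu (fun n => hbound n z hzR)
  rw [Summable.tsum_eq_zero_add hs]
  simp only [Nat.cast_zero, zero_mul, mul_zero, zero_add]
  refine tsum_congr fun n => ?_
  simp only [Nat.add_sub_cancel]
  push_cast
  ring

/-! ### Coefficient sequences -/

noncomputable def bb (m n : ℕ) : ℂ := (((m + n).factorial : ℂ) * (n.factorial : ℂ))⁻¹
noncomputable def bb1 (m : ℕ) (n : ℕ) : ℂ := ((n : ℂ) + 1) * bb m (n + 1)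
noncomputable def cc (m n : ℕ) : ℂ := (dg n + dg (n + m)) * bb m n
noncomputable def cc1 (m n : ℕ) : ℂ := ((n : ℂ) + 1) * cc m (n + 1)
noncomputable def cc2 (m n : ℕ) : ℂ := ((n : ℂ) + 1) * cc1 m (n + 1)
noncomputable def ee (m n : ℕ) : ℂ := (((n : ℂ) + 1)⁻¹ + ((m : ℂ) + n + 1)⁻¹) * bb m n

lemma bb_norm_le (m n : ℕ) : ‖bb m n‖ ≤ ((n.factorial : ℝ))⁻¹ := by
  rw [bb, norm_inv, norm_mul, Complex.norm_natCast, Complex.norm_natCast, mul_inv]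
  have h1 : (((m + n).factorial : ℝ))⁻¹ ≤ 1 := by
    rw [inv_le_one_iff₀]
    right
    exact_mod_cast (m + n).factorial_pos
  have h2 : (0:ℝ) < ((n.factorial : ℝ))⁻¹ := by positivity
  nlinarith

lemma maj_bb (m : ℕ) : Maj (bb m) 1 1 := by
  refine ⟨zero_le_one, le_refl 1, fun n => ?_⟩
  simpa using bb_norm_le m n

lemma maj_bb_tail (m : ℕ) : Maj (fun n => bb m (n + 1)) 1 1 := by
  refine ⟨zero_le_one, le_refl 1, fun n => ?_⟩
  simp only [one_mul, one_pow]
  refine (bb_norm_le m (n + 1)).trans ?_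
  rw [one_div]
  have hpos : (0:ℝ) < (n.factorial : ℝ) := by exact_mod_cast n.factorial_pos
  have hle : (n.factorial : ℝ) ≤ ((n+1).factorial : ℝ) := by
    exact_mod_cast Nat.factorial_le (Nat.le_succ n)
  exact inv_anti₀ hpos hle

lemma maj_cc (m : ℕ) : Maj (cc m) (2 * ‖dg 0‖ + m + 2) 2 := by
  refine ⟨by positivity, one_le_two, fun n => ?_⟩
  rw [cc, norm_mul]
  have h1 : ‖dg n + dg (n + m)‖ ≤ (2 * ‖dg 0‖ + m + 2) * 2 ^ n := by
    have b1 := dg_bound n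
    have b2 := dg_bound (n + m)
    have h2 : (n : ℝ) ≤ 2 ^ n := nat_le_two_pow n
    have h3 : (1:ℝ) ≤ 2 ^ n := one_le_pow₀ one_le_two
    have h0 : 0 ≤ ‖dg 0‖ := norm_nonneg _
    calc ‖dg n + dg (n + m)‖ ≤ ‖dg n‖ + ‖dg (n + m)‖ := norm_add_le _ _
      _ ≤ (‖dg 0‖ + n) + (‖dg 0‖ + (n + m)) := by
          push_cast at b2 ⊢; exact add_le_add b1 b2
      _ ≤ (2 * ‖dg 0‖ + m + 2) * 2 ^ n := by nlinarith
  calc ‖dg n + dg (n + m)‖ * ‖bb m n‖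
      ≤ ((2 * ‖dg 0‖ + m + 2) * 2 ^ n) * ((n.factorial : ℝ))⁻¹ := by
        apply mul_le_mul h1 (bb_norm_le m n) (norm_nonneg _) (by positivity)
    _ = (2 * ‖dg 0‖ + m + 2) * 2 ^ n / n.factorial := by ring

/-! ### Rewriting `Fm` and `Dm` as power series -/

noncomputable def aa (m k : ℕ) : ℂ :=
  (-1 : ℂ) ^ (k - 1) * ((k - 1).factorial : ℂ) / (((m - k).factorial : ℂ))

noncomputable def Pp (m : ℕ) (z : ℂ) : ℂ :=
  ∑ k ∈ Finset.Icc 1 m, aa m k * z ^ (-(k : ℤ))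

noncomputable def Ss (m : ℕ) (z : ℂ) : ℂ := ∑' n : ℕ, cc m n * z ^ n

lemma Fm_eq (m : ℕ) : Fm m = fun z => ∑' n : ℕ, bb m n * z ^ n := by
  funext z
  rw [Fm]
  refine tsum_congr fun n => ?_
  rw [bb, div_eq_mul_inv, mul_comm]

lemma Dm_eq (m : ℕ) (z : ℂ) : Dm m z = Pp m z - Ss m z := by
  rw [Dm, Pp, Ss]
  congr 1
  refine tsum_congr fun k => ?_
  rw [cc, bb, dg, dg]
  have e1 : ((k + m : ℕ) : ℂ) + 1 = (k : ℂ) + m + 1 := by push_cast; ring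
  rw [e1]
  rw [div_eq_mul_inv, mul_comm ((k.factorial : ℂ)) (((m + k).factorial : ℂ)), mul_inv]

/-! ### Termwise identities -/

lemma fact_ne (n : ℕ) : ((n.factorial : ℂ)) ≠ 0 := Nat.cast_ne_zero.mpr n.factorial_ne_zero

lemma natc_add_ne (m n : ℕ) : ((m : ℂ) + n + 1) ≠ 0 := by
  have : (((m + n : ℕ)) : ℂ) + 1 ≠ 0 := natc_add_one_ne_zero (m + n)
  simpa [Nat.cast_add, add_assoc] using this

lemma bb_succ (m n : ℕ) :
    ((n : ℂ) + 1) * ((m : ℂ) + n + 1) * bb m (n + 1) = bb m n := by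
  rw [bb, bb]
  have h1 : (m + (n + 1)).factorial = (m + n + 1) * (m + n).factorial := by
    rw [← Nat.add_assoc, Nat.factorial_succ]
  rw [h1, Nat.factorial_succ]
  have h2 := fact_ne (m + n)
  have h3 := fact_ne n
  have h4 := natc_add_one_ne_zero n
  have h5 := natc_add_ne m n
  push_cast
  field_simp

lemma TS (m n : ℕ) : ((n : ℂ) + m + 1) * cc1 m n = cc m n + ee m n := by
  have hb := bb_succ m n
  have h1 := dg_succ n
  have h2 : dg (n + 1 + m) = dg (n + m) + 1 / (((n + m : ℕ) : ℂ) + 1) := by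
    rw [show n + 1 + m = (n + m) + 1 from by omega]
    exact dg_succ (n + m)
  rw [cc1, cc, cc, ee, h1, h2]
  have h4 := natc_add_one_ne_zero n
  have h5 := natc_add_ne m n
  have h6 : ((n : ℂ) + m + 1) ≠ 0 := by
    have := natc_add_ne m n; intro hc; apply this; linear_combination hc
  have h7 : (((n + m : ℕ)) : ℂ) + 1 = (m : ℂ) + n + 1 := by push_cast; ring
  rw [h7]
  have hbn1 : bb m (n + 1) = ((n : ℂ) + 1)⁻¹ * (((m : ℂ) + n + 1)⁻¹ * bb m n) := by
    rw [← hb]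
    field_simp
  rw [hbn1]
  field_simp
  ring

/-! ### The series part of the ODE -/

lemma maj_cc1 (m : ℕ) : Maj (cc1 m) ((2 * ‖dg 0‖ + m + 2) * 2) 2 := (maj_cc m).shift

lemma maj_cc2 (m : ℕ) : Maj (cc2 m) ((2 * ‖dg 0‖ + m + 2) * 2 * 2) 2 := (maj_cc1 m).shift

lemma SER (m : ℕ) (z : ℂ) :
    z * (∑' n : ℕ, cc2 m n * z ^ n) + ((m : ℂ) + 1) * (∑' n : ℕ, cc1 m n * z ^ n)
      - (∑' n : ℕ, cc m n * z ^ n) = ∑' n : ℕ, ee m n * z ^ n := by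
  have hA : Summable fun n : ℕ => (n : ℂ) * cc1 m n * z ^ n := (maj_cc1 m).mul_nat.summable z
  have hB : Summable fun n : ℕ => ((m : ℂ) + 1) * cc1 m n * z ^ n :=
    ((maj_cc1 m).const_mul ((m : ℂ) + 1)).summable z
  have hC : Summable fun n : ℕ => cc m n * z ^ n := (maj_cc m).summable z
  have e1 : z * (∑' n : ℕ, cc2 m n * z ^ n) = ∑' n : ℕ, (n : ℂ) * cc1 m n * z ^ n := by
    rw [← tsum_mul_left, Summable.tsum_eq_zero_add hA]
    simp only [Nat.cast_zero, zero_mul, zero_add]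
    refine tsum_congr fun n => ?_
    rw [cc2]
    push_cast
    ring
  have e2 : ((m : ℂ) + 1) * (∑' n : ℕ, cc1 m n * z ^ n)
      = ∑' n : ℕ, ((m : ℂ) + 1) * cc1 m n * z ^ n := by
    rw [← tsum_mul_left]
    exact tsum_congr fun n => by ring
  rw [e1, e2, ← Summable.tsum_add hA hB, ← Summable.tsum_sub (hA.add hB) hC]
  refine tsum_congr fun n => ?_
  have := TS m n
  linear_combination z ^ n * this

/-! ### The right-hand side -/

lemma RHSL (m : ℕ) (z : ℂ) (hz : z ≠ 0) :
    -((m : ℂ) / z) * (∑' n : ℕ, bb m n * z ^ n) - 2 * (∑' n : ℕ, bb1 m n * z ^ n)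
      = -((m : ℂ) / (m.factorial : ℂ)) * z⁻¹ - ∑' n : ℕ, ee m n * z ^ n := by
  have hsb := (maj_bb m).summable z
  have hT : Summable fun n : ℕ => (m : ℂ) * bb m (n + 1) * z ^ n :=
    ((maj_bb_tail m).const_mul (m : ℂ)).summable z
  have hU : Summable fun n : ℕ => 2 * bb1 m n * z ^ n :=
    (((maj_bb m).shift.const_mul 2)).summable z
  have e0 : bb m 0 = ((m.factorial : ℂ))⁻¹ := by simp [bb]
  have key : ∀ n : ℕ, (m : ℂ) * bb m (n + 1) * z ^ n + 2 * bb1 m n * z ^ n = ee m n * z ^ n := by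
    intro n
    have hb := bb_succ m n
    have h4 := natc_add_one_ne_zero n
    have h5 := natc_add_ne m n
    have hee : ee m n = ((m : ℂ) + 2 * n + 2) * bb m (n + 1) := by
      rw [ee, ← hb]
      field_simp
      ring
    rw [hee, bb1]
    ring
  have e1 : ((m : ℂ) / z) * ∑' n : ℕ, bb m (n + 1) * z ^ (n + 1)
      = ∑' n : ℕ, (m : ℂ) * bb m (n + 1) * z ^ n := by
    rw [← tsum_mul_left]
    refine tsum_congr fun n => ?_
    rw [pow_succ]
    field_simp
  rw [Summable.tsum_eq_zero_add hsb, pow_zero, mul_one, e0, mul_add]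
  have e2 : (2 : ℂ) * (∑' n : ℕ, bb1 m n * z ^ n) = ∑' n : ℕ, 2 * bb1 m n * z ^ n := by
    rw [← tsum_mul_left]; exact tsum_congr fun n => by ring
  have e3 : (∑' n : ℕ, (m : ℂ) * bb m (n + 1) * z ^ n) + ∑' n : ℕ, 2 * bb1 m n * z ^ n
      = ∑' n : ℕ, ee m n * z ^ n := by
    rw [← Summable.tsum_add hT hU]; exact tsum_congr key
  have e4 : -((m : ℂ) / z) * ((m.factorial : ℂ))⁻¹ = -((m : ℂ) / (m.factorial : ℂ)) * z⁻¹ := by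
    rw [div_eq_mul_inv, div_eq_mul_inv]
    ring
  have e5 : -((m : ℂ) / z) * ∑' n : ℕ, bb m (n + 1) * z ^ (n + 1)
      = -∑' n : ℕ, (m : ℂ) * bb m (n + 1) * z ^ n := by rw [← e1]; ring
  rw [e5, e2, e4]
  linear_combination -e3

/-! ### The finite (polar) part -/

noncomputable def Pp1 (m : ℕ) (z : ℂ) : ℂ :=
  ∑ k ∈ Finset.Icc 1 m, aa m k * (((-(k : ℤ) : ℤ) : ℂ) * z ^ (-(k : ℤ) - 1))

noncomputable def Pp2 (m : ℕ) (z : ℂ) : ℂ :=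
  ∑ k ∈ Finset.Icc 1 m,
    aa m k * (((-(k : ℤ) : ℤ) : ℂ) * (((-(k : ℤ) - 1 : ℤ) : ℂ) * z ^ (-(k : ℤ) - 1 - 1)))

lemma hasDerivAt_Pp (m : ℕ) (z : ℂ) (hz : z ≠ 0) : HasDerivAt (Pp m) (Pp1 m z) z := by
  apply HasDerivAt.fun_sum
  intro k _
  exact (hasDerivAt_zpow (-(k : ℤ)) z (Or.inl hz)).const_mul (aa m k)

lemma hasDerivAt_Pp1 (m : ℕ) (z : ℂ) (hz : z ≠ 0) : HasDerivAt (Pp1 m) (Pp2 m z) z := by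
  apply HasDerivAt.fun_sum
  intro k _
  exact ((hasDerivAt_zpow (-(k : ℤ) - 1) z (Or.inl hz)).const_mul
    (((-(k : ℤ) : ℤ) : ℂ))).const_mul (aa m k)

lemma SHIFT (M : ℕ) (z : ℂ) :
    ∑ k ∈ Finset.Icc 1 (M + 1),
        aa (M + 1) k * ((k : ℂ) * ((k : ℂ) - ((M : ℂ) + 1))) * z ^ (-(k : ℤ) - 1)
      = ∑ k ∈ Finset.Icc 2 (M + 1), aa (M + 1) k * z ^ (-(k : ℤ)) := by
  rw [Finset.sum_Icc_succ_top (by omega : 1 ≤ M + 1)]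
  have htop : ((M + 1 : ℕ) : ℂ) - ((M : ℂ) + 1) = 0 := by push_cast; ring
  rw [htop, mul_zero, mul_zero, zero_mul, add_zero]
  have hmap : Finset.Icc 2 (M + 1) = Finset.map (addRightEmbedding 1) (Finset.Icc 1 M) := by
    rw [Finset.map_add_right_Icc]
  rw [hmap, Finset.sum_map]
  refine Finset.sum_congr rfl fun k hk => ?_
  rw [Finset.mem_Icc] at hk
  obtain ⟨hk1, hkM⟩ := hk
  obtain ⟨j, rfl⟩ : ∃ j, k = j + 1 := ⟨k - 1, by omega⟩
  have hemb : addRightEmbedding 1 (j + 1) = j + 2 := rfl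
  rw [hemb]
  have hE : (-(((j + 2 : ℕ)) : ℤ)) = -(((j + 1 : ℕ)) : ℤ) - 1 := by push_cast; ring
  rw [hE]
  rw [aa, aa]
  have f1 : (j + 1) - 1 = j := by omega
  have f2 : (M + 1) - (j + 1) = (M - j - 1) + 1 := by omega
  have f3 : (j + 2) - 1 = j + 1 := by omega
  have f4 : (M + 1) - (j + 2) = M - j - 1 := by omega
  rw [f1, f2, f3, f4, Nat.factorial_succ, Nat.factorial_succ]
  have f5 : ((M - j - 1 : ℕ) : ℂ) + 1 = (M : ℂ) - (j : ℂ) := by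
    have e : (M - j - 1) + 1 = M - j := by omega
    calc ((M - j - 1 : ℕ) : ℂ) + 1 = (((M - j - 1) + 1 : ℕ) : ℂ) := by push_cast; ring
      _ = ((M - j : ℕ) : ℂ) := by rw [e]
      _ = (M : ℂ) - (j : ℂ) := by rw [Nat.cast_sub (by omega : j ≤ M)]
  have f6 : ((j + 1 : ℕ) : ℂ) - ((M : ℂ) + 1) = -((M : ℂ) - (j : ℂ)) := by push_cast; ring
  have f7 : (M : ℂ) - (j : ℂ) ≠ 0 := by
    have : ((M - j : ℕ) : ℂ) ≠ 0 := Nat.cast_ne_zero.mpr (by omega)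
    rwa [Nat.cast_sub (by omega : j ≤ M)] at this
  have f8 := fact_ne (M - j - 1)
  have f9 := fact_ne j
  push_cast [f5, f6]
  have hpow : (-1 : ℂ) ^ (j + 1) = (-1) ^ j * (-1) := by rw [pow_succ]
  rw [hpow]
  field_simp
  ring

lemma FIN (m : ℕ) (z : ℂ) (hz : z ≠ 0) :
    z * Pp2 m z + ((m : ℂ) + 1) * Pp1 m z - Pp m z
      = -((m : ℂ) / (m.factorial : ℂ)) * z⁻¹ := by
  rw [Pp, Pp1, Pp2, Finset.mul_sum, Finset.mul_sum, ← Finset.sum_add_distrib,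
    ← Finset.sum_sub_distrib]
  have step : ∀ k ∈ Finset.Icc 1 m,
      (z * (aa m k * (((-(k : ℤ) : ℤ) : ℂ) * (((-(k : ℤ) - 1 : ℤ) : ℂ) * z ^ (-(k : ℤ) - 1 - 1))))
        + ((m : ℂ) + 1) * (aa m k * (((-(k : ℤ) : ℤ) : ℂ) * z ^ (-(k : ℤ) - 1))))
        - aa m k * z ^ (-(k : ℤ))
      = aa m k * ((k : ℂ) * ((k : ℂ) - ((m : ℂ)))) * z ^ (-(k : ℤ) - 1)
        - aa m k * z ^ (-(k : ℤ)) := by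
    intro k _
    have hp : z ^ (-(k : ℤ) - 1 - 1) = z ^ (-(k : ℤ) - 1) * z⁻¹ := zpow_sub_one₀ hz _
    rw [hp]
    have hzz : z * z⁻¹ = 1 := mul_inv_cancel₀ hz
    push_cast
    field_simp
    ring
  rw [Finset.sum_congr rfl step, Finset.sum_sub_distrib]
  rcases m with _ | M
  · simp
  · have hS := SHIFT M z
    have e1 : ∀ k ∈ Finset.Icc 1 (M + 1),
        aa (M + 1) k * ((k : ℂ) * ((k : ℂ) - (((M + 1 : ℕ) : ℂ)))) * z ^ (-(k : ℤ) - 1)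
        = aa (M + 1) k * ((k : ℂ) * ((k : ℂ) - ((M : ℂ) + 1))) * z ^ (-(k : ℤ) - 1) := by
      intro k _
      norm_num
    rw [Finset.sum_congr rfl e1, hS]
    have hsplit : Finset.Icc 1 (M + 1) = insert 1 (Finset.Icc 2 (M + 1)) := by
      ext x
      simp only [Finset.mem_Icc, Finset.mem_insert]
      omega
    rw [hsplit, Finset.sum_insert (by simp)]
    have ha1 : aa (M + 1) 1 = ((M.factorial : ℂ))⁻¹ := by
      simp [aa]
    rw [ha1]
    have hfac : (((M + 1).factorial : ℕ) : ℂ) = ((M : ℂ) + 1) * (M.factorial : ℂ) := by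
      rw [Nat.factorial_succ]; push_cast; ring
    rw [hfac]
    have h1 := fact_ne M
    have h2 := natc_add_one_ne_zero M
    have hzp : z ^ (-(1 : ℕ) : ℤ) = z⁻¹ := by norm_num
    rw [hzp]
    push_cast
    field_simp
    ring

theorem Dm_inhomogeneous (m : ℕ) (z : ℂ) (hz : z ≠ 0) :
    z * deriv (deriv (Dm m)) z + (m + 1) * deriv (Dm m) z - Dm m z
      = -((m : ℂ) / z) * Fm m z - 2 * deriv (Fm m) z := by
  have hDm : Dm m = fun w => Pp m w - Ss m w := funext fun w => Dm_eq m w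
  -- derivatives of the series parts
  have hS : ∀ w : ℂ, HasDerivAt (Ss m) (∑' n : ℕ, cc1 m n * w ^ n) w := fun w =>
    (maj_cc m).hasDerivAt w
  have hS1 : ∀ w : ℂ, HasDerivAt (fun u => ∑' n : ℕ, cc1 m n * u ^ n)
      (∑' n : ℕ, cc2 m n * w ^ n) w := fun w => (maj_cc1 m).hasDerivAt w
  -- first derivative of Dm away from 0
  have hD1 : ∀ w : ℂ, w ≠ 0 → HasDerivAt (Dm m)
      (Pp1 m w - ∑' n : ℕ, cc1 m n * w ^ n) w := by
    intro w hw
    rw [hDm]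
    exact (hasDerivAt_Pp m w hw).sub (hS w)
  have hderiv1 : deriv (Dm m) z = Pp1 m z - ∑' n : ℕ, cc1 m n * z ^ n := (hD1 z hz).deriv
  have hEE : deriv (Dm m) =ᶠ[nhds z] fun w => Pp1 m w - ∑' n : ℕ, cc1 m n * w ^ n := by
    filter_upwards [eventually_ne_nhds hz] with w hw
    exact (hD1 w hw).deriv
  have hderiv2 : deriv (deriv (Dm m)) z = Pp2 m z - ∑' n : ℕ, cc2 m n * z ^ n := by
    rw [hEE.deriv_eq]
    exact ((hasDerivAt_Pp1 m z hz).sub (hS1 z)).deriv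
  -- Fm and its derivative
  have hFm : Fm m z = ∑' n : ℕ, bb m n * z ^ n := by rw [Fm_eq]
  have hFd : deriv (Fm m) z = ∑' n : ℕ, bb1 m n * z ^ n := by
    rw [Fm_eq]
    exact ((maj_bb m).hasDerivAt z).deriv
  rw [hderiv1, hderiv2, hFm, hFd, Dm_eq m z]
  have hfin := FIN m z hz
  have hser := SER m z
  have hrhs := RHSL m z hz
  rw [Ss]
  push_cast
  linear_combination hfin - hser - hrhs
end

section
/- For integers m ≥ 0 and z in ℂ ∖ (−∞, 0], the function log(z)·𝐅_m(z) + 𝐃_m(z) is annihilated by the 0F1 operator: z·∂_z²(log z·𝐅_m + 𝐃_m)(z) + (m+1)·∂_z(log z·𝐅_m + 𝐃_m)(z) − (log z·𝐅_m + 𝐃_m)(z) = 0. -/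
open Complex

open Filter

namespace LFD


/-- Summability of `(n+1)^k r^n / n!`. -/
lemma summable_aux (k : ℕ) {r : ℝ} (hr : 0 ≤ r) :
    Summable (fun n : ℕ => (n + 1 : ℝ) ^ k * r ^ n / n.factorial) := by
  have hgeom : Summable (fun n : ℕ => (n : ℝ) ^ k * (1/2 : ℝ) ^ n) :=
    summable_pow_mul_geometric_of_norm_lt_one k (r := (1/2 : ℝ)) (by norm_num)
  have h2 : Summable (fun n : ℕ => (n + 1 : ℝ) ^ k * (1/2 : ℝ) ^ n) := by
    have := ((summable_nat_add_iff 1).2 hgeom).mul_left 2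
    refine this.congr fun n => ?_
    push_cast
    ring
  apply Summable.of_norm_bounded_eventually_nat h2
  have htend : Tendsto (fun n : ℕ => (2 * r) ^ n / n.factorial) atTop (nhds 0) :=
    FloorSemiring.tendsto_pow_div_factorial_atTop (2 * r)
  have hev : ∀ᶠ n : ℕ in atTop, (2 * r) ^ n / n.factorial ≤ 1 := by
    filter_upwards [htend.eventually (gt_mem_nhds (by norm_num : (0:ℝ) < 1))] with n hn
    exact le_of_lt hn
  filter_upwards [hev] with n hn
  have hfac : (0 : ℝ) < n.factorial := by positivity
  have h1 : r ^ n / n.factorial ≤ (1/2 : ℝ) ^ n := by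
    have : r ^ n / n.factorial = ((2*r) ^ n / n.factorial) * (1/2 : ℝ) ^ n := by
      rw [div_mul_eq_mul_div, mul_pow, mul_assoc, mul_comm ((2:ℝ)^n), mul_assoc, ← mul_pow]
      norm_num
    rw [this]
    calc ((2*r) ^ n / n.factorial) * (1/2 : ℝ) ^ n ≤ 1 * (1/2:ℝ)^n := by
          apply mul_le_mul_of_nonneg_right hn (by positivity)
      _ = (1/2:ℝ)^n := one_mul _
  rw [Real.norm_of_nonneg (by positivity)]
  calc (n + 1 : ℝ) ^ k * r ^ n / n.factorial
      = (n + 1 : ℝ) ^ k * (r ^ n / n.factorial) := by ring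
    _ ≤ (n + 1 : ℝ) ^ k * (1/2:ℝ)^n := by
        apply mul_le_mul_of_nonneg_left h1 (by positivity)

/-- Coefficient bound predicate. -/
def Bd (c : ℕ → ℂ) (A : ℝ) : Prop := ∀ n, ‖c n‖ ≤ A * (n + 1) ^ 3 / n.factorial

lemma Bd.nonneg {c : ℕ → ℂ} {A : ℝ} (h : Bd c A) : 0 ≤ A := by
  have := (norm_nonneg (c 0)).trans (h 0)
  simpa using this

/-- derived coefficients -/
noncomputable def dc (c : ℕ → ℂ) : ℕ → ℂ := fun n => ((n : ℂ) + 1) * c (n + 1)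

lemma Bd.dc {c : ℕ → ℂ} {A : ℝ} (h : Bd c A) : Bd (dc c) (8 * A) := by
  intro n
  have hA := h.nonneg
  have h1 : ‖LFD.dc c n‖ = ((n:ℝ) + 1) * ‖c (n+1)‖ := by
    rw [LFD.dc, norm_mul]
    congr 1
    rw [show ((n:ℂ) + 1) = ((n+1 : ℕ) : ℂ) by push_cast; ring, Complex.norm_natCast]
    push_cast; ring
  rw [h1]
  calc ((n:ℝ) + 1) * ‖c (n+1)‖ ≤ ((n:ℝ)+1) * (A * ((n:ℝ)+1+1)^3 / (n+1).factorial) := by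
        apply mul_le_mul_of_nonneg_left _ (by positivity)
        have := h (n+1); push_cast at this ⊢; convert this using 3 <;> push_cast <;> ring
    _ ≤ 8 * A * ((n:ℝ)+1)^3 / n.factorial := by
        rw [Nat.factorial_succ]
        push_cast
        have hfac : (0:ℝ) < (n.factorial : ℝ) := by positivity
        have hn1 : (0:ℝ) < (n:ℝ) + 1 := by positivity
        have heq : ((n:ℝ)+1) * (A * ((n:ℝ)+1+1)^3 / (((n:ℝ)+1) * n.factorial))
            = A * ((n:ℝ)+1+1)^3 / (n.factorial : ℝ) := by
          field_simp
        rw [heq]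
        have hx : (1:ℝ) ≤ (n:ℝ)+1 := by linarith [Nat.cast_nonneg (α := ℝ) n]
        have h2 : ((n:ℝ)+1)^2 ≤ ((n:ℝ)+1)^3 := pow_le_pow_right₀ hx (by norm_num)
        have h3 : ((n:ℝ)+1)^1 ≤ ((n:ℝ)+1)^3 := pow_le_pow_right₀ hx (by norm_num)
        have h4 : (1:ℝ) ≤ ((n:ℝ)+1)^3 := one_le_pow₀ hx
        have hb : ((n:ℝ)+1+1)^3 ≤ 8 * ((n:ℝ)+1)^3 := by nlinarith [h2, h3, h4]
        gcongr ?x / _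
        calc A * ((n:ℝ)+1+1)^3 ≤ A * (8 * ((n:ℝ)+1)^3) :=
              mul_le_mul_of_nonneg_left hb hA
          _ = 8 * A * ((n:ℝ)+1)^3 := by ring

lemma summable_T {c : ℕ → ℂ} {A : ℝ} (h : Bd c A) (z : ℂ) :
    Summable (fun n => c n * z ^ n) := by
  apply Summable.of_norm_bounded (g := fun n : ℕ => A * ((n + 1 : ℝ) ^ 3 * ‖z‖ ^ n / n.factorial))
    (((summable_aux 3 (norm_nonneg z)).mul_left A).congr (fun n => by ring))
  intro n
  rw [norm_mul, norm_pow]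
  calc ‖c n‖ * ‖z‖ ^ n ≤ (A * (n+1)^3 / n.factorial) * ‖z‖ ^ n := by
        apply mul_le_mul_of_nonneg_right (h n) (by positivity)
    _ = A * ((n + 1 : ℝ) ^ 3 * ‖z‖ ^ n / n.factorial) := by ring

lemma summable_T' {c : ℕ → ℂ} {A : ℝ} (h : Bd c A) (z : ℂ) :
    Summable (fun n : ℕ => (n : ℂ) * c n * z ^ n) := by
  apply Summable.of_norm_bounded (g := fun n : ℕ => A * ((n + 1 : ℝ) ^ 4 * ‖z‖ ^ n / n.factorial))
    (((summable_aux 4 (norm_nonneg z)).mul_left A).congr (fun n => by ring))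
  intro n
  rw [norm_mul, norm_mul, norm_pow, Complex.norm_natCast]
  have h1 : (n:ℝ) * ‖c n‖ ≤ ((n:ℝ)+1) * (A * (n+1)^3 / n.factorial) := by
    apply mul_le_mul (by linarith) (h n) (norm_nonneg _) (by positivity)
  calc (n:ℝ) * ‖c n‖ * ‖z‖ ^ n ≤ (((n:ℝ)+1) * (A * (n+1)^3 / n.factorial)) * ‖z‖ ^ n := by
        apply mul_le_mul_of_nonneg_right h1 (by positivity)
    _ = A * ((n + 1 : ℝ) ^ 4 * ‖z‖ ^ n / n.factorial) := by ring

/-- Termwise differentiation of entire-type power series. -/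
lemma hasDerivAt_T {c : ℕ → ℂ} {A : ℝ} (h : Bd c A) (z : ℂ) :
    HasDerivAt (fun w => ∑' n, c n * w ^ n) (∑' n, dc c n * z ^ n) z := by
  have hA := h.nonneg
  set R : ℝ := ‖z‖ + 1 with hR
  have hR1 : (1:ℝ) ≤ R := le_add_of_nonneg_left (norm_nonneg z)
  have hzR : z ∈ Metric.ball (0:ℂ) R := by
    simp [Metric.mem_ball, hR]
  have hbound : ∀ (n : ℕ) (y : ℂ), y ∈ Metric.ball (0:ℂ) R →
      ‖c n * ((n : ℂ) * y ^ (n - 1))‖ ≤ A * ((n + 1 : ℝ) ^ 4 * R ^ n / n.factorial) := by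
    intro n y hy
    have hyR : ‖y‖ ≤ R := by
      rw [Metric.mem_ball, dist_zero_right] at hy; exact hy.le
    rw [norm_mul, norm_mul, norm_pow, Complex.norm_natCast]
    have hy1 : ‖y‖ ^ (n-1) ≤ R ^ n := by
      calc ‖y‖ ^ (n-1) ≤ R ^ (n-1) := pow_le_pow_left₀ (norm_nonneg y) hyR _
        _ ≤ R ^ n := pow_le_pow_right₀ hR1 (Nat.sub_le n 1)
    calc ‖c n‖ * ((n:ℝ) * ‖y‖ ^ (n-1))
        ≤ (A * (n+1)^3 / n.factorial) * (((n:ℝ)+1) * R ^ n) := by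
          apply mul_le_mul (h n) _ (by positivity) (by positivity)
          exact mul_le_mul (by linarith) hy1 (by positivity) (by linarith [Nat.cast_nonneg (α := ℝ) n])
      _ = A * ((n + 1 : ℝ) ^ 4 * R ^ n / n.factorial) := by ring
  have key : HasDerivAt (fun w => ∑' n, c n * w ^ n) (∑' n, c n * ((n : ℂ) * z ^ (n - 1))) z := by
    refine hasDerivAt_tsum_of_isPreconnected
      (((summable_aux 4 (by linarith : (0:ℝ) ≤ R)).mul_left A).congr (fun n => by ring))
      Metric.isOpen_ball (convex_ball (0:ℂ) R).isPreconnected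
      (fun n y _ => (hasDerivAt_pow n y).const_mul (c n)) hbound hzR (summable_T h z) hzR
  have hsum : Summable (fun n => c n * ((n : ℂ) * z ^ (n - 1))) :=
    Summable.of_norm_bounded
      (((summable_aux 4 (by linarith : (0:ℝ) ≤ R)).mul_left A).congr (fun n => by ring))
      (fun n => hbound n z hzR)
  convert key using 1
  rw [Summable.tsum_eq_zero_add hsum]
  simp only [Nat.cast_zero, zero_mul, mul_zero, zero_add]
  exact tsum_congr fun n => by rw [dc]; push_cast; ring

lemma shift_T {c : ℕ → ℂ} {A : ℝ} (h : Bd c A) (z : ℂ) :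
    z * ∑' n, dc c n * z ^ n = ∑' n : ℕ, (n : ℂ) * c n * z ^ n := by
  rw [← tsum_mul_left, Summable.tsum_eq_zero_add (summable_T' h z)]
  simp only [Nat.cast_zero, zero_mul]
  rw [zero_add]
  exact tsum_congr fun n => by rw [dc]; push_cast; ring

lemma ode_T {c : ℕ → ℂ} {A : ℝ} (h : Bd c A) (m : ℕ) (z : ℂ) :
    z * (∑' n, dc (dc c) n * z ^ n) + ((m : ℂ) + 1) * (∑' n, dc c n * z ^ n)
      - ∑' n, c n * z ^ n
      = ∑' n : ℕ, (((n : ℂ) + m + 1) * dc c n - c n) * z ^ n := by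
  rw [shift_T h.dc z, ← tsum_mul_left,
    ← Summable.tsum_add (summable_T' h.dc z) ((summable_T h.dc z).mul_left _),
    ← Summable.tsum_sub (((summable_T' h.dc z)).add ((summable_T h.dc z).mul_left _))
      (summable_T h z)]
  exact tsum_congr fun n => by ring



lemma nat_succ_ne_neg (j : ℕ) : ∀ k : ℕ, ((j : ℂ) + 1) ≠ -(k : ℂ) := by
  intro k h
  have h2 := congrArg Complex.re h
  simp only [Complex.add_re, Complex.natCast_re, Complex.one_re, Complex.neg_re] at h2
  have h3 : (0:ℝ) ≤ (j:ℝ) := Nat.cast_nonneg j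
  have h4 : (0:ℝ) ≤ (k:ℝ) := Nat.cast_nonneg k
  linarith

lemma digamma_add_one {x : ℂ} (hx : ∀ k : ℕ, x ≠ -(k : ℂ)) :
    _root_.digamma (x + 1) = _root_.digamma x + x⁻¹ := by
  have hx0 : x ≠ 0 := by simpa using hx 0
  have hΓ : Complex.Gamma x ≠ 0 := Complex.Gamma_ne_zero hx
  have hd : DifferentiableAt ℂ Complex.Gamma x := Complex.differentiableAt_Gamma x hx
  have hx1 : ∀ k : ℕ, x + 1 ≠ -(k : ℂ) := by
    intro k h
    apply hx (k + 1)
    push_cast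
    linear_combination h
  have hd1 : DifferentiableAt ℂ Complex.Gamma (x + 1) := Complex.differentiableAt_Gamma _ hx1
  have h1 : HasDerivAt (fun w => Complex.Gamma (w + 1)) (deriv Complex.Gamma (x + 1)) x := by
    have := hd1.hasDerivAt.comp x ((hasDerivAt_id x).add_const 1)
    simpa [Function.comp_def] using this
  have h2 : HasDerivAt (fun w => w * Complex.Gamma w)
      (1 * Complex.Gamma x + x * deriv Complex.Gamma x) x :=
    (hasDerivAt_id x).mul hd.hasDerivAt
  have heq : (fun w => Complex.Gamma (w + 1)) =ᶠ[nhds x] (fun w => w * Complex.Gamma w) := by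
    filter_upwards [eventually_ne_nhds hx0] with w hw using Complex.Gamma_add_one w hw
  have h2' : HasDerivAt (fun w => Complex.Gamma (w + 1))
      (1 * Complex.Gamma x + x * deriv Complex.Gamma x) x :=
    h2.congr_of_eventuallyEq heq
  have hder : deriv Complex.Gamma (x + 1) = Complex.Gamma x + x * deriv Complex.Gamma x := by
    have := h1.unique h2'
    rw [this]; ring
  have hΓ1 : Complex.Gamma (x + 1) = x * Complex.Gamma x := Complex.Gamma_add_one x hx0
  rw [_root_.digamma, _root_.digamma, hder, hΓ1]
  field_simp
  ring

lemma norm_digamma_nat (n : ℕ) : ‖_root_.digamma ((n : ℂ) + 1)‖ ≤ ‖_root_.digamma 1‖ + n := by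
  induction n with
  | zero => simp
  | succ n ih =>
    have h1 : _root_.digamma (((n+1 : ℕ) : ℂ) + 1) = _root_.digamma ((n : ℂ) + 1) + ((n : ℂ) + 1)⁻¹ := by
      rw [show (((n+1 : ℕ) : ℂ) + 1) = ((n : ℂ) + 1) + 1 by push_cast; ring]
      exact digamma_add_one (nat_succ_ne_neg n)
    rw [h1]
    have h2 : ‖((n : ℂ) + 1)⁻¹‖ ≤ 1 := by
      rw [norm_inv, show ((n:ℂ) + 1) = ((n+1 : ℕ) : ℂ) by push_cast; ring, Complex.norm_natCast]
      rw [inv_le_one_iff₀]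
      right
      exact_mod_cast Nat.one_le_iff_ne_zero.2 (Nat.succ_ne_zero n)
    calc ‖_root_.digamma ((n : ℂ) + 1) + ((n : ℂ) + 1)⁻¹‖
        ≤ ‖_root_.digamma ((n : ℂ) + 1)‖ + ‖((n : ℂ) + 1)⁻¹‖ := norm_add_le _ _
      _ ≤ (‖_root_.digamma 1‖ + n) + 1 := add_le_add ih h2
      _ = ‖_root_.digamma 1‖ + (n + 1 : ℕ) := by push_cast; ring



variable (m : ℕ)

/-- coefficients of `𝐅_m`. -/
noncomputable def ca (n : ℕ) : ℂ := (((m + n).factorial : ℂ) * (n.factorial : ℂ))⁻¹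

/-- coefficients of the series part of `𝐃_m`. -/
noncomputable def cb (n : ℕ) : ℂ :=
  (_root_.digamma ((n : ℂ) + 1) + _root_.digamma ((n : ℂ) + (m : ℂ) + 1)) * ca m n

lemma ca_norm (n : ℕ) : ‖ca m n‖ = (((m+n).factorial : ℝ) * n.factorial)⁻¹ := by
  rw [ca, show (((m + n).factorial : ℂ) * (n.factorial : ℂ)) = (((m+n).factorial * n.factorial : ℕ) : ℂ) by push_cast; ring,
    norm_inv, Complex.norm_natCast]
  push_cast
  ring

lemma ca_norm_le (n : ℕ) : ‖ca m n‖ ≤ ((n.factorial : ℝ))⁻¹ := by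
  rw [ca_norm]
  have h1 : (n.factorial : ℝ) ≤ ((m+n).factorial : ℝ) * n.factorial := by
    have : (1 : ℝ) ≤ ((m+n).factorial : ℝ) := by exact_mod_cast (m+n).factorial_pos
    nlinarith [show (0:ℝ) < n.factorial by positivity]
  exact inv_anti₀ (by positivity) h1

lemma bd_ca : Bd (ca m) 1 := by
  intro n
  calc ‖ca m n‖ ≤ ((n.factorial : ℝ))⁻¹ := ca_norm_le m n
    _ ≤ 1 * (n + 1) ^ 3 / n.factorial := by
        have hnum : (1:ℝ) ≤ ((n:ℝ) + 1) ^ 3 := one_le_pow₀ (by linarith [Nat.cast_nonneg (α := ℝ) n])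
        calc ((n.factorial : ℝ))⁻¹ = 1 * ((n.factorial : ℝ))⁻¹ := (one_mul _).symm
          _ ≤ ((n:ℝ)+1)^3 * ((n.factorial : ℝ))⁻¹ :=
              mul_le_mul_of_nonneg_right hnum (by positivity)
          _ = 1 * (n + 1) ^ 3 / n.factorial := by ring

lemma bd_cb : Bd (cb m) (2 * ‖_root_.digamma 1‖ + m + 2) := by
  intro n
  have h1 : ‖_root_.digamma ((n : ℂ) + 1)‖ ≤ ‖_root_.digamma 1‖ + n := norm_digamma_nat n
  have h2 : ‖_root_.digamma ((n : ℂ) + (m : ℂ) + 1)‖ ≤ ‖_root_.digamma 1‖ + (n + m) := by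
    have := norm_digamma_nat (n + m)
    rw [show (((n+m:ℕ)):ℂ) = (n:ℂ) + (m:ℂ) by push_cast; ring] at this
    exact_mod_cast this
  rw [cb, norm_mul]
  have h3 : ‖_root_.digamma ((n : ℂ) + 1) + _root_.digamma ((n : ℂ) + (m : ℂ) + 1)‖
      ≤ (2 * ‖_root_.digamma 1‖ + m + 2) * (n + 1) := by
    calc ‖_root_.digamma ((n : ℂ) + 1) + _root_.digamma ((n : ℂ) + (m : ℂ) + 1)‖
        ≤ ‖_root_.digamma ((n : ℂ) + 1)‖ + ‖_root_.digamma ((n : ℂ) + (m : ℂ) + 1)‖ := norm_add_le _ _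
      _ ≤ (‖_root_.digamma 1‖ + n) + (‖_root_.digamma 1‖ + (n + m)) := by push_cast; exact add_le_add h1 h2
      _ ≤ (2 * ‖_root_.digamma 1‖ + m + 2) * (n + 1) := by
          nlinarith [norm_nonneg (_root_.digamma 1), Nat.cast_nonneg (α := ℝ) n, Nat.cast_nonneg (α := ℝ) m]
  calc ‖_root_.digamma ((n : ℂ) + 1) + _root_.digamma ((n : ℂ) + (m : ℂ) + 1)‖ * ‖ca m n‖
      ≤ ((2 * ‖_root_.digamma 1‖ + m + 2) * (n + 1)) * ((n.factorial : ℝ))⁻¹ := by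
        apply mul_le_mul h3 (ca_norm_le m n) (norm_nonneg _) (by positivity)
    _ ≤ (2 * ‖_root_.digamma 1‖ + m + 2) * (n + 1) ^ 3 / n.factorial := by
        rw [div_eq_mul_inv]
        apply mul_le_mul_of_nonneg_right _ (by positivity)
        have hn1 : (1:ℝ) ≤ (n:ℝ) + 1 := by linarith [Nat.cast_nonneg (α := ℝ) n]
        have hC : (0:ℝ) ≤ 2 * ‖_root_.digamma 1‖ + m + 2 := by positivity
        nlinarith [pow_le_pow_right₀ hn1 (by norm_num : 1 ≤ 3)]

/-- The fundamental recurrence for `ca`. -/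
lemma ca_rec (n : ℕ) : ca m n = ((n : ℂ) + 1) * ((n : ℂ) + m + 1) * ca m (n + 1) := by
  have e1 : (m + (n + 1)).factorial = (m + n + 1) * (m + n).factorial := by
    rw [show m + (n + 1) = (m + n) + 1 by ring, Nat.factorial_succ]
  rw [ca, ca, e1, Nat.factorial_succ, Nat.cast_mul, Nat.cast_mul]
  have hf3 : ((n : ℂ) + 1) ≠ 0 := by
    simpa using nat_succ_ne_neg n 0
  have hf4 : ((n : ℂ) + m + 1) ≠ 0 := by
    have := nat_succ_ne_neg (n + m) 0
    rw [show (((n+m:ℕ)):ℂ) = (n:ℂ) + (m:ℂ) by push_cast; ring] at this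
    simpa [add_right_comm] using this
  rw [show ((m+n+1 : ℕ) : ℂ) = (n:ℂ) + m + 1 by push_cast; ring,
    show ((n+1 : ℕ) : ℂ) = (n:ℂ) + 1 by push_cast; ring]
  set X : ℂ := ((m+n).factorial : ℂ)
  set Y : ℂ := (n.factorial : ℂ)
  rw [show ((n:ℂ) + 1) * ((n:ℂ) + m + 1) * ((((n:ℂ)+m+1) * X) * (((n:ℂ)+1) * Y))⁻¹
      = (((n:ℂ)+1) * (((n:ℂ)+1))⁻¹) * ((((n:ℂ)+m+1)) * (((n:ℂ)+m+1))⁻¹) * (X * Y)⁻¹ by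
        rw [mul_inv, mul_inv, mul_inv]; ring,
    mul_inv_cancel₀ hf3, mul_inv_cancel₀ hf4, one_mul, one_mul]

/-- coefficient identity I : `F` solves the ODE termwise. -/
lemma coeff_I (n : ℕ) : ((n : ℂ) + m + 1) * dc (ca m) n - ca m n = 0 := by
  rw [dc, ca_rec m n]
  ring

/-- coefficient identity II. -/
lemma coeff_II (n : ℕ) :
    ((n : ℂ) + m + 1) * dc (cb m) n - cb m n
      = (m : ℂ) * ca m (n + 1) + 2 * dc (ca m) n := by
  have hf3 : ((n : ℂ) + 1) ≠ 0 := by simpa using nat_succ_ne_neg n 0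
  have hf4 : ((n : ℂ) + m + 1) ≠ 0 := by
    have := nat_succ_ne_neg (n + m) 0
    rw [show (((n+m:ℕ)):ℂ) = (n:ℂ) + (m:ℂ) by push_cast; ring] at this
    simpa [add_right_comm] using this
  have hψ1 : _root_.digamma (((n+1:ℕ) : ℂ) + 1) = _root_.digamma ((n : ℂ) + 1) + ((n : ℂ) + 1)⁻¹ := by
    rw [show (((n+1:ℕ) : ℂ) + 1) = ((n : ℂ) + 1) + 1 by push_cast; ring]
    exact digamma_add_one (nat_succ_ne_neg n)
  have hψ2 : _root_.digamma (((n+1:ℕ) : ℂ) + (m:ℂ) + 1)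
      = _root_.digamma ((n : ℂ) + (m:ℂ) + 1) + ((n : ℂ) + (m:ℂ) + 1)⁻¹ := by
    rw [show (((n+1:ℕ) : ℂ) + (m:ℂ) + 1) = ((n : ℂ) + (m:ℂ) + 1) + 1 by push_cast; ring,
      show ((n : ℂ) + (m:ℂ) + 1) = ((n+m : ℕ) : ℂ) + 1 by push_cast; ring]
    rw [digamma_add_one (nat_succ_ne_neg (n+m))]
  rw [dc, dc, cb, cb, hψ1, hψ2, ca_rec m n]
  have hrw : ((n:ℂ) + m + 1) * (((n:ℂ) + 1) *
      ((_root_.digamma ((n:ℂ)+1) + ((n:ℂ)+1)⁻¹ + (_root_.digamma ((n:ℂ)+(m:ℂ)+1) + ((n:ℂ)+(m:ℂ)+1)⁻¹)) * ca m (n+1)))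
      - (_root_.digamma ((n:ℂ)+1) + _root_.digamma ((n:ℂ)+(m:ℂ)+1)) * (((n:ℂ)+1) * ((n:ℂ)+m+1) * ca m (n+1))
      = (m : ℂ) * ca m (n + 1) + 2 * (((n:ℂ)+1) * ca m (n+1)) := by
    field_simp
    ring
  exact hrw




noncomputable def p (k : ℕ) : ℂ :=
  (-1 : ℂ) ^ (k - 1) * ((k - 1).factorial : ℂ) / ((m - k).factorial : ℂ)

noncomputable def P (z : ℂ) : ℂ := ∑ k ∈ Finset.Icc 1 m, p m k * z ^ (-(k : ℤ))

noncomputable def P₁ (z : ℂ) : ℂ :=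
  ∑ k ∈ Finset.Icc 1 m, (p m k * (-(k : ℤ) : ℂ)) * z ^ (-(k : ℤ) - 1)

noncomputable def P₂ (z : ℂ) : ℂ :=
  ∑ k ∈ Finset.Icc 1 m, ((p m k * (-(k : ℤ) : ℂ)) * ((-(k : ℤ) - 1 : ℤ) : ℂ)) * z ^ (-(k : ℤ) - 1 - 1)

lemma hasDerivAt_P {z : ℂ} (hz : z ≠ 0) : HasDerivAt (P m) (P₁ m z) z := by
  apply HasDerivAt.fun_sum
  intro k _
  have h := (hasDerivAt_zpow (-(k:ℤ)) z (Or.inl hz)).const_mul (p m k)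
  convert h using 1
  push_cast
  exacts [rfl, by push_cast; ring]

lemma hasDerivAt_P₁ {z : ℂ} (hz : z ≠ 0) : HasDerivAt (P₁ m) (P₂ m z) z := by
  apply HasDerivAt.fun_sum
  intro k _
  have h := (hasDerivAt_zpow (-(k:ℤ) - 1) z (Or.inl hz)).const_mul (p m k * (-(k : ℤ) : ℂ))
  convert h using 1
  push_cast
  exacts [rfl, by ring]

lemma p_succ {k : ℕ} (hk1 : 1 ≤ k) (hkm : k + 1 ≤ m) :
    p m (k + 1) = p m k * ((k : ℂ) * ((k : ℂ) - m)) := by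
  obtain ⟨j, rfl⟩ : ∃ j, k = j + 1 := ⟨k - 1, by omega⟩
  have e1 : m - (j + 1) = (m - (j + 2)) + 1 := by omega
  have e2 : ((m - (j+1) : ℕ) : ℂ) = (m : ℂ) - ((j:ℂ) + 1) := by
    rw [Nat.cast_sub (by omega)]; push_cast; ring
  rw [p, p]
  simp only [Nat.add_sub_cancel, show j + 1 + 1 - 1 = j + 1 from rfl]
  rw [e1, Nat.factorial_succ, Nat.factorial_succ]
  have hne : ((m - (j + 2)).factorial : ℂ) ≠ 0 := Nat.cast_ne_zero.2 (Nat.factorial_ne_zero _)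
  have hne2 : ((m - (j+1) : ℕ) : ℂ) ≠ 0 := by
    refine Nat.cast_ne_zero.2 ?_
    omega
  rw [show ((m - (j+2)) + 1 : ℕ) = m - (j+1) by omega]
  push_cast [e2] at hne2 ⊢
  field_simp
  ring

lemma ode_P {z : ℂ} (hz : z ≠ 0) :
    z * P₂ m z + ((m : ℂ) + 1) * P₁ m z - P m z = -(m : ℂ) * ca m 0 * z⁻¹ := by
  rcases Nat.eq_zero_or_pos m with hm | hm
  · subst hm
    simp [P, P₁, P₂]
  rw [P, P₂, P₁, Finset.mul_sum, Finset.mul_sum, ← Finset.sum_add_distrib,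
    ← Finset.sum_sub_distrib]
  have step1 : ∀ k ∈ Finset.Icc 1 m,
      z * (((p m k * (-(k : ℤ) : ℂ)) * ((-(k : ℤ) - 1 : ℤ) : ℂ)) * z ^ (-(k : ℤ) - 1 - 1))
        + ((m : ℂ) + 1) * ((p m k * (-(k : ℤ) : ℂ)) * z ^ (-(k : ℤ) - 1))
        - p m k * z ^ (-(k : ℤ))
      = (p m k * ((k : ℂ) * ((k : ℂ) - m))) * z ^ (-(k : ℤ) - 1) - p m k * z ^ (-(k : ℤ)) := by
    intro k _
    rw [show (-(k:ℤ) - 1) = (-(k:ℤ) - 1 - 1) + 1 by ring, zpow_add_one₀ hz]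
    push_cast
    ring
  rw [Finset.sum_congr rfl step1, Finset.sum_sub_distrib]
  have SA : ∑ k ∈ Finset.Icc 1 m, (p m k * ((k : ℂ) * ((k : ℂ) - m))) * z ^ (-(k : ℤ) - 1)
      = ∑ k ∈ Finset.Icc 2 m, p m k * z ^ (-(k : ℤ)) := by
    have hm1 : m = (m - 1) + 1 := by omega
    rw [hm1, Finset.sum_Icc_succ_top (by omega : 1 ≤ (m-1) + 1), ← hm1]
    simp only [sub_self, mul_zero, zero_mul, add_zero]
    have hmap : Finset.Icc 2 m = (Finset.Icc 1 (m-1)).map (addRightEmbedding 1) := by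
      rw [Finset.map_add_right_Icc]
      congr 1 <;> omega
    rw [hmap, Finset.sum_map]
    simp only [addRightEmbedding_apply]
    apply Finset.sum_congr rfl
    intro k hk
    rw [Finset.mem_Icc] at hk
    rw [p_succ m hk.1 (by omega)]
    rw [show (-((k+1 : ℕ) : ℤ)) = -(k:ℤ) - 1 by push_cast; ring]
  rw [SA]
  have hins : Finset.Icc 1 m = insert 1 (Finset.Icc 2 m) := by
    ext x
    simp only [Finset.mem_Icc, Finset.mem_insert]
    omega
  rw [hins, Finset.sum_insert (by simp)]
  have hp1 : p m 1 = (((m-1).factorial : ℂ))⁻¹ := by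
    rw [p]
    simp [Nat.factorial]
  have hm0 : (m : ℂ) ≠ 0 := Nat.cast_ne_zero.2 (by omega)
  have hfac : m.factorial = m * (m-1).factorial := by
    conv_lhs => rw [show m = (m - 1) + 1 by omega]
    rw [Nat.factorial_succ]
    congr 1
    omega
  have hca : (m : ℂ) * ca m 0 = (((m-1).factorial : ℂ))⁻¹ := by
    rw [ca]
    simp only [Nat.add_zero, Nat.factorial_zero, Nat.cast_one, mul_one, hfac]
    push_cast
    rw [mul_inv, ← mul_assoc, mul_inv_cancel₀ hm0, one_mul]
  rw [hp1]
  simp only [Nat.cast_one, zpow_neg, zpow_one]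
  linear_combination z⁻¹ * hca


/-- The sum of a power series with coefficients `c`. -/
noncomputable def T (c : ℕ → ℂ) (z : ℂ) : ℂ := ∑' n : ℕ, c n * z ^ n

lemma bd_sh (m : ℕ) : Bd (fun n => ca m (n + 1)) 1 := by
  intro n
  calc ‖ca m (n+1)‖ ≤ (((n+1).factorial : ℝ))⁻¹ := ca_norm_le m (n+1)
    _ ≤ ((n.factorial : ℝ))⁻¹ := by
        apply inv_anti₀ (by positivity)
        exact_mod_cast Nat.factorial_le (Nat.le_succ n)
    _ ≤ 1 * (n + 1) ^ 3 / n.factorial := by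
        have hnum : (1:ℝ) ≤ ((n:ℝ) + 1) ^ 3 := one_le_pow₀ (by linarith [Nat.cast_nonneg (α := ℝ) n])
        calc ((n.factorial : ℝ))⁻¹ = 1 * ((n.factorial : ℝ))⁻¹ := (one_mul _).symm
          _ ≤ ((n:ℝ)+1)^3 * ((n.factorial : ℝ))⁻¹ :=
              mul_le_mul_of_nonneg_right hnum (by positivity)
          _ = 1 * (n + 1) ^ 3 / n.factorial := by ring

end LFD

open LFD

theorem log_Fm_add_Dm_solves (m : ℕ) (z : ℂ) (hz : z ∈ Complex.slitPlane) :
    z * deriv (deriv (fun w => Complex.log w * Fm m w + Dm m w)) z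
      + (m + 1) * deriv (fun w => Complex.log w * Fm m w + Dm m w) z
      - (Complex.log z * Fm m z + Dm m z) = 0 := by
  have hz0 : z ≠ 0 := Complex.slitPlane_ne_zero hz
  -- rewrite `Fm` and `Dm` in standard power-series form
  have hFm : Fm m = T (ca m) := by
    funext w
    rw [Fm, T]
    exact tsum_congr fun n => by rw [LFD.ca, div_eq_mul_inv, mul_comm]
  have hDm : Dm m = fun w => P m w - T (cb m) w := by
    funext w
    rw [Dm, T, P]
    congr 1
    exact tsum_congr fun k => by
      rw [LFD.cb, LFD.ca, div_eq_mul_inv, mul_comm ((k.factorial : ℂ)) (((m+k).factorial : ℂ))]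
  have hT : ∀ (c : ℕ → ℂ) {A : ℝ}, Bd c A → ∀ w : ℂ, HasDerivAt (T c) (T (dc c) w) w := by
    intro c A hA w
    exact hasDerivAt_T hA w
  -- first derivative
  have h1 : ∀ w ∈ Complex.slitPlane, HasDerivAt (fun w => Complex.log w * Fm m w + Dm m w)
      ((w⁻¹ * T (ca m) w + Complex.log w * T (dc (ca m)) w) + (P₁ m w - T (dc (cb m)) w)) w := by
    intro w hw
    have hw0 : w ≠ 0 := Complex.slitPlane_ne_zero hw
    rw [hFm, hDm]
    exact ((Complex.hasDerivAt_log hw).mul (hT _ (bd_ca m) w)).add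
      ((hasDerivAt_P m hw0).sub (hT _ (bd_cb m) w))
  -- second derivative
  have h2 : ∀ w ∈ Complex.slitPlane, HasDerivAt
      (fun w => (w⁻¹ * T (ca m) w + Complex.log w * T (dc (ca m)) w) + (P₁ m w - T (dc (cb m)) w))
      (((-(w^2)⁻¹ * T (ca m) w + w⁻¹ * T (dc (ca m)) w)
        + (w⁻¹ * T (dc (ca m)) w + Complex.log w * T (dc (dc (ca m))) w))
        + (P₂ m w - T (dc (dc (cb m))) w)) w := by
    intro w hw
    have hw0 : w ≠ 0 := Complex.slitPlane_ne_zero hw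
    exact (((hasDerivAt_inv hw0).mul (hT _ (bd_ca m) w)).add
        ((Complex.hasDerivAt_log hw).mul (hT _ (bd_ca m).dc w))).add
      ((hasDerivAt_P₁ m hw0).sub (hT _ (bd_cb m).dc w))
  have hev : deriv (fun w => Complex.log w * Fm m w + Dm m w) =ᶠ[nhds z]
      (fun w => (w⁻¹ * T (ca m) w + Complex.log w * T (dc (ca m)) w)
        + (P₁ m w - T (dc (cb m)) w)) := by
    filter_upwards [Complex.isOpen_slitPlane.mem_nhds hz] with w hw
    exact (h1 w hw).deriv
  have e2 : deriv (deriv (fun w => Complex.log w * Fm m w + Dm m w)) z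
      = ((-(z^2)⁻¹ * T (ca m) z + z⁻¹ * T (dc (ca m)) z)
        + (z⁻¹ * T (dc (ca m)) z + Complex.log z * T (dc (dc (ca m))) z))
        + (P₂ m z - T (dc (dc (cb m))) z) := by
    rw [Filter.EventuallyEq.deriv_eq hev]
    exact (h2 z hz).deriv
  have e1 : deriv (fun w => Complex.log w * Fm m w + Dm m w) z
      = (z⁻¹ * T (ca m) z + Complex.log z * T (dc (ca m)) z) + (P₁ m z - T (dc (cb m)) z) :=
    (h1 z hz).deriv
  rw [e2, e1, hFm, hDm]
  -- the series identities
  have tsum_ode : ∀ (c : ℕ → ℂ) {A : ℝ}, Bd c A →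
      z * T (dc (dc c)) z + ((m : ℂ) + 1) * T (dc c) z - T c z
        = ∑' n : ℕ, (((n : ℂ) + m + 1) * dc c n - c n) * z ^ n := by
    intro c A hA
    exact ode_T hA m z
  have I1 : z * T (dc (dc (ca m))) z + ((m : ℂ) + 1) * T (dc (ca m)) z - T (ca m) z = 0 := by
    rw [tsum_ode _ (bd_ca m)]
    rw [tsum_congr (fun n => by rw [coeff_I m n, zero_mul])]
    exact tsum_zero
  have I2 : z * T (dc (dc (cb m))) z + ((m : ℂ) + 1) * T (dc (cb m)) z - T (cb m) z
      = (m : ℂ) * T (fun n => ca m (n + 1)) z + 2 * T (dc (ca m)) z := by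
    rw [tsum_ode _ (bd_cb m)]
    rw [tsum_congr (fun n => by rw [coeff_II m n])]
    rw [tsum_congr (fun n => show ((m : ℂ) * ca m (n + 1) + 2 * dc (ca m) n) * z ^ n
        = (m : ℂ) * (ca m (n + 1) * z ^ n) + 2 * (dc (ca m) n * z ^ n) by ring)]
    rw [Summable.tsum_add ((summable_T (bd_sh m) z).mul_left _) ((summable_T (bd_ca m).dc z).mul_left _),
      tsum_mul_left, tsum_mul_left]
    rfl
  have I3 : T (ca m) z = ca m 0 + z * T (fun n => ca m (n + 1)) z := by
    rw [T, T, Summable.tsum_eq_zero_add (summable_T (bd_ca m) z), ← tsum_mul_left]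
    congr 1
    · rw [pow_zero, mul_one]
    · exact tsum_congr fun n => by ring
  have I4 := ode_P m hz0
  have hzz : z * z⁻¹ = 1 := mul_inv_cancel₀ hz0
  have hz2 : z * (z^2)⁻¹ = z⁻¹ := by
    rw [sq, mul_inv, ← mul_assoc, mul_inv_cancel₀ hz0, one_mul]
  linear_combination (Complex.log z) * I1 + I4 - I2 + (m : ℂ) * z⁻¹ * I3
    - (T (ca m) z) * hz2 + (2 * T (dc (ca m)) z + (m : ℂ) * T (fun n => ca m (n + 1)) z) * hzz
end

section
/- For integers m ≥ 1 and z ≠ 0, the recurrence (z∂_z + m)𝐃_m(z) = 𝐃_{m−1}(z) − 𝐅_m(z) holds. -/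
open Complex

lemma nat_ne_neg {n : ℕ} (hn : 0 < n) : ∀ j : ℕ, (n : ℂ) ≠ -j := by
  intro j h
  have h2 : ((n + j : ℕ) : ℂ) = 0 := by push_cast; linear_combination h
  exact absurd (Nat.cast_eq_zero.mp h2) (by omega)

lemma digamma_succ {n : ℕ} (hn : 0 < n) :
    _root_.digamma ((n : ℂ) + 1) = _root_.digamma n + 1 / n := by
  have hne := nat_ne_neg hn
  have hn0 : (n : ℂ) ≠ 0 := by simpa using (hne 0)
  have hΓ : Complex.Gamma n ≠ 0 := Complex.Gamma_ne_zero hne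
  have hd : DifferentiableAt ℂ Complex.Gamma n := Complex.differentiableAt_Gamma _ hne
  have hne1 : ∀ j : ℕ, ((n : ℂ) + 1) ≠ -j := by
    have h := nat_ne_neg (n := n + 1) (by omega)
    intro j hj; exact h j (by push_cast; push_cast at hj; linear_combination hj)
  have h1 : HasDerivAt (fun w : ℂ => w * Complex.Gamma w)
      (1 * Complex.Gamma n + (n : ℂ) * deriv Complex.Gamma n) n :=
    (hasDerivAt_id _).mul hd.hasDerivAt
  have h2 : HasDerivAt (fun w : ℂ => Complex.Gamma (w + 1))
      (deriv Complex.Gamma ((n : ℂ) + 1)) n := by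
    have hcomp := ((Complex.differentiableAt_Gamma _ hne1).hasDerivAt).comp (n : ℂ)
      ((hasDerivAt_id (n : ℂ)).add_const 1)
    simpa [Function.comp_def] using hcomp
  have heq : (fun w : ℂ => Complex.Gamma (w + 1)) =ᶠ[nhds (n : ℂ)]
      (fun w : ℂ => w * Complex.Gamma w) := by
    filter_upwards [isOpen_ne.mem_nhds hn0] with w hw
    exact Complex.Gamma_add_one w hw
  have h2' : HasDerivAt (fun w : ℂ => w * Complex.Gamma w)
      (deriv Complex.Gamma ((n : ℂ) + 1)) n := h2.congr_of_eventuallyEq heq.symm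
  have hder : deriv Complex.Gamma ((n : ℂ) + 1)
      = Complex.Gamma n + (n : ℂ) * deriv Complex.Gamma n := by
    simpa using h2'.unique h1
  have hΓ1 : Complex.Gamma ((n : ℂ) + 1) = (n : ℂ) * Complex.Gamma n :=
    Complex.Gamma_add_one _ hn0
  rw [_root_.digamma, _root_.digamma, hder, hΓ1]
  field_simp
  ring

lemma digamma_nat_bound (n : ℕ) : ‖_root_.digamma ((n : ℂ) + 1)‖ ≤ ‖_root_.digamma 1‖ + n := by
  induction n with
  | zero => simp
  | succ n ih =>
    have h : _root_.digamma (((n + 1 : ℕ) : ℂ) + 1) = _root_.digamma ((n : ℂ) + 1) + 1 / ((n : ℂ) + 1) := by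
      have := digamma_succ (n := n + 1) (by omega)
      push_cast at this ⊢
      exact this
    rw [h]
    have hnorm : ‖(1 : ℂ) / ((n : ℂ) + 1)‖ ≤ 1 := by
      rw [norm_div, norm_one]
      have : ((1:ℝ)) ≤ ‖((n : ℂ) + 1)‖ := by
        have : ((n : ℂ) + 1) = ((n + 1 : ℕ) : ℂ) := by push_cast; ring
        rw [this, Complex.norm_natCast]
        exact_mod_cast Nat.one_le_iff_ne_zero.mpr (by omega)
      rw [div_le_one (by linarith)]
      linarith
    calc ‖_root_.digamma ((n : ℂ) + 1) + 1 / ((n : ℂ) + 1)‖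
        ≤ ‖_root_.digamma ((n : ℂ) + 1)‖ + ‖(1 : ℂ) / ((n : ℂ) + 1)‖ := norm_add_le _ _
      _ ≤ (‖_root_.digamma 1‖ + n) + 1 := by gcongr
      _ = ‖_root_.digamma 1‖ + (n + 1 : ℕ) := by push_cast; ring

lemma summable_master (A B C R : ℝ) :
    Summable fun k : ℕ => (A + B * k + C * k ^ 2) * R ^ k / (k.factorial : ℝ) := by
  have hbase : Summable fun k : ℕ => (|A| + |B| + |C|) * ((4 * |R|) ^ k / k.factorial) :=
    (Real.summable_pow_div_factorial (4 * |R|)).mul_left _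
  refine Summable.of_norm_bounded hbase fun k => ?_
  have h4 : (0:ℝ) < 4 ^ k := by positivity
  have hk2 : ((k : ℝ)) ≤ 2 ^ k := by exact_mod_cast (Nat.lt_two_pow_self (n := k)).le
  have h24 : (2:ℝ) ^ k ≤ 4 ^ k := by gcongr <;> norm_num
  have hk4 : ((k : ℝ)) ≤ 4 ^ k := hk2.trans h24
  have hk24 : ((k : ℝ)) ^ 2 ≤ 4 ^ k := by
    calc ((k:ℝ))^2 ≤ (2^k)^2 := by gcongr
      _ = 4 ^ k := by rw [← pow_mul, mul_comm, pow_mul]; norm_num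
  have h14 : (1:ℝ) ≤ 4 ^ k := one_le_pow₀ (by norm_num)
  have hfac : (0:ℝ) < k.factorial := by exact_mod_cast k.factorial_pos
  rw [Real.norm_eq_abs, abs_div, abs_of_pos hfac, abs_mul, _root_.abs_pow]
  rw [div_le_iff₀ hfac, mul_pow]
  have hcancel : (|A| + |B| + |C|) * (4 ^ k * |R| ^ k / (k.factorial:ℝ)) * k.factorial
      = (|A| + |B| + |C|) * (4 ^ k * |R| ^ k) := by
    field_simp
  rw [hcancel]
  have habs : |A + B * k + C * k ^ 2| ≤ (|A| + |B| + |C|) * 4 ^ k := by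
    calc |A + B * k + C * k ^ 2| ≤ |A| + |B * k| + |C * k ^ 2| := by
          exact (abs_add_le _ _).trans (by gcongr; exact abs_add_le _ _)
      _ = |A| + |B| * k + |C| * k ^ 2 := by
          rw [abs_mul, abs_mul, Nat.abs_cast, _root_.abs_pow, Nat.abs_cast]
      _ ≤ (|A| + |B| + |C|) * 4 ^ k := by
          nlinarith [abs_nonneg A, abs_nonneg B, abs_nonneg C]
  have hRk : (0:ℝ) ≤ |R| ^ k := by positivity
  calc |A + B * ↑k + C * ↑k ^ 2| * |R| ^ k ≤ ((|A| + |B| + |C|) * 4 ^ k) * |R| ^ k := by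
        exact mul_le_mul_of_nonneg_right habs hRk
    _ = (|A| + |B| + |C|) * (4 ^ k * |R| ^ k) := by ring

noncomputable def dcoef (m k : ℕ) : ℂ :=
  (_root_.digamma (k + 1) + _root_.digamma (k + m + 1)) / (k.factorial * (m + k).factorial)

noncomputable def Pm (m : ℕ) (z : ℂ) : ℂ :=
  ∑ k ∈ Finset.Icc 1 m,
      (-1 : ℂ) ^ (k - 1) * (k - 1).factorial / (m - k).factorial * z ^ (-(k : ℤ))

noncomputable def Gm (m : ℕ) (z : ℂ) : ℂ := ∑' k : ℕ, dcoef m k * z ^ k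


lemma norm_dcoef (m k : ℕ) :
    ‖dcoef m k‖ ≤ (2 * ‖_root_.digamma 1‖ + m + 2 * k) / (k.factorial : ℝ) := by
  have h1 := digamma_nat_bound k
  have h2 := digamma_nat_bound (k + m)
  have h2' : ‖_root_.digamma ((k : ℂ) + m + 1)‖ ≤ ‖_root_.digamma 1‖ + (k + m) := by
    have : ((k + m : ℕ) : ℂ) + 1 = (k : ℂ) + m + 1 := by push_cast; ring
    rw [this] at h2; exact_mod_cast h2
  have hnum : ‖_root_.digamma ((k : ℂ) + 1) + _root_.digamma ((k : ℂ) + m + 1)‖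
      ≤ 2 * ‖_root_.digamma 1‖ + m + 2 * k := by
    calc ‖_root_.digamma ((k : ℂ) + 1) + _root_.digamma ((k : ℂ) + m + 1)‖
        ≤ ‖_root_.digamma ((k : ℂ) + 1)‖ + ‖_root_.digamma ((k : ℂ) + m + 1)‖ := norm_add_le _ _
      _ ≤ (‖_root_.digamma 1‖ + k) + (‖_root_.digamma 1‖ + (k + m)) := by gcongr
      _ = 2 * ‖_root_.digamma 1‖ + m + 2 * k := by ring
  have hden : ‖((k.factorial : ℂ) * ((m + k).factorial : ℂ))‖
      = (k.factorial : ℝ) * ((m + k).factorial : ℝ) := by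
    rw [norm_mul, Complex.norm_natCast, Complex.norm_natCast]
  rw [dcoef, norm_div, hden]
  have hkf : (0:ℝ) < k.factorial := by exact_mod_cast k.factorial_pos
  have hmf : (1:ℝ) ≤ (m + k).factorial := by exact_mod_cast (m + k).factorial_pos
  have hnn : (0:ℝ) ≤ 2 * ‖_root_.digamma 1‖ + m + 2 * k := by positivity
  calc ‖_root_.digamma ((k:ℂ) + 1) + _root_.digamma ((k:ℂ) + m + 1)‖ / ((k.factorial:ℝ) * (m + k).factorial)
      ≤ (2 * ‖_root_.digamma 1‖ + m + 2 * k) / ((k.factorial:ℝ) * 1) := by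
        gcongr
      _ = (2 * ‖_root_.digamma 1‖ + m + 2 * k) / (k.factorial : ℝ) := by rw [mul_one]

lemma summable_G (m : ℕ) (w : ℂ) : Summable fun k : ℕ => dcoef m k * w ^ k := by
  refine Summable.of_norm_bounded
    (summable_master (2 * ‖_root_.digamma 1‖ + m) 2 0 ‖w‖) fun k => ?_
  rw [norm_mul, norm_pow]
  calc ‖dcoef m k‖ * ‖w‖ ^ k
      ≤ ((2 * ‖_root_.digamma 1‖ + m + 2 * k) / (k.factorial : ℝ)) * ‖w‖ ^ k := by
        exact mul_le_mul_of_nonneg_right (norm_dcoef m k) (by positivity)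
    _ = (2 * ‖_root_.digamma 1‖ + ↑m + 2 * ↑k + 0 * ↑k ^ 2) * ‖w‖ ^ k / ↑k.factorial := by ring

lemma summable_F (m : ℕ) (w : ℂ) :
    Summable fun k : ℕ => w ^ k / (((m + k).factorial : ℂ) * (k.factorial : ℂ)) := by
  refine Summable.of_norm_bounded (summable_master 1 0 0 ‖w‖) fun k => ?_
  rw [norm_div, norm_pow, norm_mul, Complex.norm_natCast, Complex.norm_natCast]
  have hkf : (0:ℝ) < k.factorial := by exact_mod_cast k.factorial_pos
  have hmf : (1:ℝ) ≤ (m + k).factorial := by exact_mod_cast (m + k).factorial_pos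
  calc ‖w‖ ^ k / (((m + k).factorial : ℝ) * k.factorial)
      ≤ ‖w‖ ^ k / (1 * (k.factorial : ℝ)) := by
        gcongr
      _ = (1 + 0 * ↑k + 0 * ↑k ^ 2) * ‖w‖ ^ k / ↑k.factorial := by ring

lemma summable_G' (m : ℕ) (z w : ℂ) (hw : ‖w‖ ≤ ‖z‖ + 1) :
    Summable fun k : ℕ => dcoef m k * ((k : ℂ) * w ^ (k - 1)) := by
  refine Summable.of_norm_bounded
    (summable_master 0 (2 * ‖_root_.digamma 1‖ + m) 2 (‖z‖ + 1)) fun k => ?_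
  have hR1 : (1:ℝ) ≤ ‖z‖ + 1 := by have := norm_nonneg z; linarith
  rw [norm_mul, norm_mul, norm_pow, Complex.norm_natCast]
  have hwk : ‖w‖ ^ (k - 1) ≤ (‖z‖ + 1) ^ k := by
    calc ‖w‖ ^ (k - 1) ≤ (‖z‖ + 1) ^ (k - 1) :=
        pow_le_pow_left₀ (norm_nonneg w) hw _
      _ ≤ (‖z‖ + 1) ^ k := pow_le_pow_right₀ hR1 (Nat.sub_le k 1)
  calc ‖dcoef m k‖ * ((k : ℝ) * ‖w‖ ^ (k - 1))
      ≤ ((2 * ‖_root_.digamma 1‖ + m + 2 * k) / (k.factorial : ℝ)) * ((k : ℝ) * (‖z‖ + 1) ^ k) := by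
        have h1 := norm_dcoef m k
        have h2 : (k:ℝ) * ‖w‖ ^ (k-1) ≤ (k:ℝ) * (‖z‖ + 1) ^ k :=
          mul_le_mul_of_nonneg_left hwk (by positivity)
        exact mul_le_mul h1 h2 (by positivity) (by positivity)
      _ = (0 + (2 * ‖_root_.digamma 1‖ + ↑m) * ↑k + 2 * ↑k ^ 2) * (‖z‖ + 1) ^ k / ↑k.factorial := by
        ring

lemma hasDerivAt_Gm (m : ℕ) (z : ℂ) :
    HasDerivAt (Gm m) (∑' k : ℕ, dcoef m k * ((k : ℂ) * z ^ (k - 1))) z := by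
  have hball : z ∈ Metric.ball (0 : ℂ) (‖z‖ + 1) := by
    simp [Metric.mem_ball, dist_zero_right]
  have hR1 : (1:ℝ) ≤ ‖z‖ + 1 := by have := norm_nonneg z; linarith
  have H := hasDerivAt_tsum_of_isPreconnected
    (u := fun k : ℕ => (0 + (2 * ‖_root_.digamma 1‖ + (m:ℝ)) * k + 2 * (k:ℝ) ^ 2) * (‖z‖ + 1) ^ k
        / (k.factorial : ℝ))
    (g := fun (k : ℕ) (w : ℂ) => dcoef m k * w ^ k)
    (g' := fun (k : ℕ) (w : ℂ) => dcoef m k * ((k : ℂ) * w ^ (k - 1)))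
    (t := Metric.ball (0 : ℂ) (‖z‖ + 1)) (y₀ := z) (y := z)
    (summable_master _ _ _ _) Metric.isOpen_ball (convex_ball _ _).isPreconnected
    ?_ ?_ hball (summable_G m z) hball
  · exact H
  · exact fun k w _ => (hasDerivAt_pow k w).const_mul _
  · intro k w hw
    have hw' : ‖w‖ ≤ ‖z‖ + 1 := by
      rw [Metric.mem_ball, dist_zero_right] at hw; linarith
    rw [norm_mul, norm_mul, norm_pow, Complex.norm_natCast]
    have hwk : ‖w‖ ^ (k - 1) ≤ (‖z‖ + 1) ^ k := by
      calc ‖w‖ ^ (k - 1) ≤ (‖z‖ + 1) ^ (k - 1) :=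
          pow_le_pow_left₀ (norm_nonneg w) hw' _
        _ ≤ (‖z‖ + 1) ^ k := pow_le_pow_right₀ hR1 (Nat.sub_le k 1)
    calc ‖dcoef m k‖ * ((k : ℝ) * ‖w‖ ^ (k - 1))
        ≤ ((2 * ‖_root_.digamma 1‖ + m + 2 * k) / (k.factorial : ℝ)) * ((k : ℝ) * (‖z‖ + 1) ^ k) := by
          have h1 := norm_dcoef m k
          have h2 : (k:ℝ) * ‖w‖ ^ (k-1) ≤ (k:ℝ) * (‖z‖ + 1) ^ k :=
            mul_le_mul_of_nonneg_left hwk (by positivity)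
          exact mul_le_mul h1 h2 (by positivity) (by positivity)
        _ = (0 + (2 * ‖_root_.digamma 1‖ + ↑m) * ↑k + 2 * ↑k ^ 2) * (‖z‖ + 1) ^ k / ↑k.factorial := by
          ring

lemma key_coef (m' k : ℕ) :
    ((k : ℂ) + ((m' + 1 : ℕ) : ℂ)) * dcoef (m' + 1) k
      = dcoef m' k + 1 / (((((m' + 1) + k).factorial : ℕ) : ℂ) * (k.factorial : ℂ)) := by
  have hrec := digamma_succ (n := k + m' + 1) (by omega)
  have hfact : ((m' + 1) + k).factorial = (k + m' + 1) * (m' + k).factorial := by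
    rw [show (m' + 1) + k = (m' + k) + 1 from by omega, Nat.factorial_succ]
    congr 1
    omega
  have hkf : ((k.factorial : ℂ)) ≠ 0 := Nat.cast_ne_zero.mpr k.factorial_pos.ne'
  have hmf : (((m' + k).factorial : ℂ)) ≠ 0 := Nat.cast_ne_zero.mpr (m' + k).factorial_pos.ne'
  have hn : ((k + m' + 1 : ℕ) : ℂ) ≠ 0 := Nat.cast_ne_zero.mpr (by omega)
  rw [dcoef, dcoef, hfact]
  have harg1 : (k : ℂ) + ((m' + 1 : ℕ) : ℂ) + 1 = ((k + m' + 1 : ℕ) : ℂ) + 1 := by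
    push_cast; ring
  have harg2 : (k : ℂ) + (m' : ℂ) + 1 = ((k + m' + 1 : ℕ) : ℂ) := by push_cast; ring
  rw [harg1, harg2, hrec]
  have hsum : ((k : ℂ) + ((m' + 1 : ℕ) : ℂ)) = ((k + m' + 1 : ℕ) : ℂ) := by push_cast; ring
  rw [hsum]
  push_cast
  push_cast at hn
  field_simp
  ring

lemma termA (m' k : ℕ) (hk2 : k ≤ m') :
    (-1:ℂ)^(k-1) * ((k-1).factorial : ℂ) / ((((m'+1)-k).factorial : ℕ) : ℂ)
        * ((m':ℂ) + 1 - k)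
      = (-1:ℂ)^(k-1) * ((k-1).factorial : ℂ) / (((m'-k).factorial : ℕ) : ℂ) := by
  obtain ⟨j, rfl⟩ : ∃ j, m' = j + k := ⟨m' - k, by omega⟩
  have h1 : (j + k + 1) - k = j + 1 := by omega
  have h2 : (j + k) - k = j := by omega
  rw [h1, h2, Nat.factorial_succ]
  have h3 : ((j + k : ℕ):ℂ) + 1 - k = ((j:ℂ) + 1) := by push_cast; ring
  rw [h3]
  have hj1 : ((j:ℂ) + 1) ≠ 0 := Nat.cast_add_one_ne_zero j
  have hjf : ((j.factorial : ℂ)) ≠ 0 := Nat.cast_ne_zero.mpr j.factorial_pos.ne'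
  push_cast
  field_simp

lemma claimB (m' : ℕ) (z : ℂ) :
    z * (∑' k : ℕ, dcoef (m' + 1) k * ((k : ℂ) * z ^ (k - 1)))
        + ((m' + 1 : ℕ) : ℂ) * Gm (m' + 1) z
      = Gm m' z + Fm (m' + 1) z := by
  have S1 := summable_G (m' + 1) z
  have S1' := summable_G m' z
  have SF := summable_F (m' + 1) z
  have S2 := summable_G' (m' + 1) z z (by linarith [norm_nonneg z])
  rw [Gm, Gm, Fm]
  rw [← tsum_mul_left (a := z), ← tsum_mul_left (a := ((m' + 1 : ℕ) : ℂ))]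
  rw [← Summable.tsum_add (S2.mul_left z) (S1.mul_left _), ← Summable.tsum_add S1' SF]
  refine tsum_congr fun k => ?_
  have hpow : z * ((k:ℂ) * z ^ (k - 1)) = (k:ℂ) * z ^ k := by
    cases k with
    | zero => simp
    | succ j => rw [Nat.add_sub_cancel]; ring
  linear_combination (dcoef (m' + 1) k) * hpow + z ^ k * key_coef m' k

lemma claimA (m' : ℕ) (z : ℂ) (hz : z ≠ 0) :
    z * (∑ k ∈ Finset.Icc 1 (m' + 1),
          (-1:ℂ)^(k-1) * ((k-1).factorial : ℂ) / ((((m'+1)-k).factorial : ℕ) : ℂ)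
            * ((((-(k:ℤ) : ℤ)) : ℂ) * z ^ (-(k:ℤ) - 1)))
        + ((m' + 1 : ℕ) : ℂ) * Pm (m' + 1) z
      = Pm m' z := by
  rw [Pm, Pm, Finset.mul_sum, Finset.mul_sum, ← Finset.sum_add_distrib]
  have hstep : ∀ k ∈ Finset.Icc 1 (m' + 1),
      z * ((-1:ℂ)^(k-1) * ((k-1).factorial : ℂ) / ((((m'+1)-k).factorial : ℕ) : ℂ)
            * ((((-(k:ℤ) : ℤ)) : ℂ) * z ^ (-(k:ℤ) - 1)))
        + ((m' + 1 : ℕ) : ℂ) * ((-1:ℂ)^(k-1) * ((k-1).factorial : ℂ)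
            / ((((m'+1)-k).factorial : ℕ) : ℂ) * z ^ (-(k:ℤ)))
      = ((-1:ℂ)^(k-1) * ((k-1).factorial : ℂ) / ((((m'+1)-k).factorial : ℕ) : ℂ)
            * ((m':ℂ) + 1 - k)) * z ^ (-(k:ℤ)) := by
    intro k hk
    have hzp : z * z ^ (-(k:ℤ) - 1) = z ^ (-(k:ℤ)) := by
      rw [zpow_sub_one₀ hz]
      field_simp
    push_cast
    linear_combination
      ((-1:ℂ)^(k-1) * ((k-1).factorial : ℂ) / ((((m'+1)-k).factorial : ℕ) : ℂ) * (-(k:ℂ))) * hzp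
  rw [Finset.sum_congr rfl hstep]
  rw [Finset.sum_Icc_succ_top (by omega : 1 ≤ m' + 1)]
  have htop : ((-1:ℂ)^((m'+1)-1) * (((m'+1)-1).factorial : ℂ)
      / ((((m'+1)-(m'+1)).factorial : ℕ) : ℂ) * ((m':ℂ) + 1 - ((m'+1 : ℕ):ℂ)))
        * z ^ (-((m'+1 : ℕ):ℤ)) = 0 := by
    have : (m':ℂ) + 1 - ((m'+1 : ℕ):ℂ) = 0 := by push_cast; ring
    rw [this]
    ring
  rw [htop, add_zero]
  refine Finset.sum_congr rfl fun k hk => ?_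
  rw [Finset.mem_Icc] at hk
  rw [termA m' k hk.2]

theorem Dm_lowering_recurrence (m : ℕ) (hm : 1 ≤ m) (z : ℂ) (hz : z ≠ 0) :
    z * deriv (Dm m) z + m * Dm m z = Dm (m - 1) z - Fm m z := by
  obtain ⟨m', rfl⟩ : ∃ m', m = m' + 1 := ⟨m - 1, by omega⟩
  have hP : HasDerivAt (fun w : ℂ => Pm (m' + 1) w)
      (∑ k ∈ Finset.Icc 1 (m' + 1),
        (-1:ℂ)^(k-1) * ((k-1).factorial : ℂ) / ((((m'+1)-k).factorial : ℕ) : ℂ)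
          * ((((-(k:ℤ) : ℤ)) : ℂ) * z ^ (-(k:ℤ) - 1))) z :=
    HasDerivAt.fun_sum fun k _ => (hasDerivAt_zpow (-(k:ℤ)) z (Or.inl hz)).const_mul _
  have hG := hasDerivAt_Gm (m' + 1) z
  have hD : HasDerivAt (Dm (m' + 1))
      ((∑ k ∈ Finset.Icc 1 (m' + 1),
        (-1:ℂ)^(k-1) * ((k-1).factorial : ℂ) / ((((m'+1)-k).factorial : ℕ) : ℂ)
          * ((((-(k:ℤ) : ℤ)) : ℂ) * z ^ (-(k:ℤ) - 1)))
       - ∑' k : ℕ, dcoef (m' + 1) k * ((k : ℂ) * z ^ (k - 1))) z := hP.sub hG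
  rw [hD.deriv]
  simp only [Nat.add_sub_cancel]
  have hDm1 : Dm (m' + 1) z = Pm (m' + 1) z - Gm (m' + 1) z := rfl
  have hDm2 : Dm m' z = Pm m' z - Gm m' z := rfl
  rw [hDm1, hDm2]
  linear_combination claimA m' z hz - claimB m' z
end

section
/- For all complex z, the quadratic relation 𝐅(c; z²) · Γ(c) = e^{−2z} · F(c − 1/2; 2c − 1; 4z) holds between the 0F1 and 1F1 functions, i.e. F(c; z²) = e^{−2z} F((2c−1)/2; 2c−1; 4z), whenever c and 2c−1 are not nonpositive integers. -/
open Complex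

open Finset

lemma poch_zero (a : ℂ) : poch a 0 = 1 := by simp [poch]

lemma poch_succ (a : ℂ) (n : ℕ) : poch a (n + 1) = poch a n * (a + n) := by
  simp [poch, ascPochhammer_succ_eval]

lemma poch_succ_left (a : ℂ) (n : ℕ) : poch a (n + 1) = a * poch (a + 1) n := by
  simp [poch, ascPochhammer_succ_left, Polynomial.eval_comp]

lemma poch_ne_zero {c : ℂ} (hc : ∀ k : ℕ, c ≠ -(k : ℂ)) (n : ℕ) : poch c n ≠ 0 := by
  induction n with
  | zero => simp [poch_zero]
  | succ m ih =>
    rw [poch_succ]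
    refine mul_ne_zero ih ?_
    intro h
    exact hc m (by linear_combination h)

lemma poch_norm_le (a : ℂ) (n : ℕ) : ‖poch a n‖ ≤ (‖a‖ + 1) ^ n * n.factorial := by
  induction n with
  | zero => simp [poch_zero]
  | succ m ih =>
    rw [poch_succ]
    calc ‖poch a m * (a + m)‖ = ‖poch a m‖ * ‖a + (m:ℂ)‖ := norm_mul _ _
      _ ≤ ((‖a‖ + 1) ^ m * m.factorial) * (‖a‖ + m) := by
          refine mul_le_mul ih ?_ (norm_nonneg _) (by positivity)
          simpa using (norm_add_le a (m:ℂ)).trans (by simp)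
      _ ≤ ((‖a‖ + 1) ^ m * m.factorial) * ((‖a‖ + 1) * (m + 1)) := by
          refine mul_le_mul_of_nonneg_left ?_ (by positivity)
          nlinarith [norm_nonneg a]
      _ = (‖a‖ + 1) ^ (m+1) * (m+1).factorial := by
          rw [pow_succ, Nat.factorial_succ]; push_cast; ring

lemma poch_norm_lower {b : ℂ} (hb : ∀ k : ℕ, b ≠ -(k : ℂ)) :
    ∃ D > 0, ∀ n : ℕ, (n.factorial : ℝ) ≤ D * (2 ^ n * ‖poch b n‖) := by
  set N : ℕ := ⌈2 * ‖b‖⌉₊ + 1 with hN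
  set g : ℕ → ℝ := fun n => n.factorial / (2 ^ n * ‖poch b n‖) with hg
  have hpos : ∀ n, 0 < 2 ^ n * ‖poch b n‖ := fun n => by
    have h := poch_ne_zero hb n
    have : 0 < ‖poch b n‖ := norm_pos_iff.mpr h
    positivity
  have gpos : ∀ n, 0 < g n := fun n => by
    have := hpos n
    have : (0:ℝ) < n.factorial := by exact_mod_cast n.factorial_pos
    rw [hg]; positivity
  have key : ∀ n, N ≤ n → g (n + 1) ≤ g n := by
    intro n hn
    rw [hg]
    dsimp only
    rw [div_le_div_iff₀ (hpos _) (hpos _)]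
    have hb2 : (n : ℝ) + 1 ≤ 2 * ‖b + n‖ := by
      have h1 : (n : ℝ) - ‖b‖ ≤ ‖b + n‖ := by
        have h := norm_sub_norm_le ((n : ℂ)) (-b)
        simp only [norm_neg, sub_neg_eq_add, Complex.norm_natCast] at h
        simpa [add_comm] using h
      have h2 : 2 * ‖b‖ + 1 ≤ (n : ℝ) := by
        have h3 : (N : ℝ) ≤ n := by exact_mod_cast hn
        have h4 : 2 * ‖b‖ ≤ (⌈2 * ‖b‖⌉₊ : ℝ) := Nat.le_ceil _
        rw [hN] at h3; push_cast at h3; linarith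
      linarith
    rw [poch_succ, Nat.factorial_succ, norm_mul, pow_succ]
    push_cast
    have h5 := mul_le_mul_of_nonneg_right hb2 (le_of_lt (hpos n))
    nlinarith [hpos n, norm_nonneg (poch b n), norm_nonneg (b + (n:ℂ))]
  have mono : ∀ n, N ≤ n → g n ≤ g N := by
    intro n hn
    induction n, hn using Nat.le_induction with
    | base => exact le_rfl
    | succ m hm ih => exact (key m hm).trans ih
  refine ⟨∑ k ∈ range (N + 1), g k, ?_, ?_⟩
  · exact Finset.sum_pos (fun k _ => gpos k) ⟨0, by simp⟩
  · intro n
    have hD : g n ≤ ∑ k ∈ range (N + 1), g k := by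
      rcases le_or_gt n N with h | h
      · exact Finset.single_le_sum (fun k _ => (gpos k).le)
          (mem_range.mpr (Nat.lt_succ_of_le h))
      · exact (mono n h.le).trans (Finset.single_le_sum (fun k _ => (gpos k).le)
          (mem_range.mpr (Nat.lt_succ_of_le le_rfl)))
    rw [hg] at hD
    dsimp only at hD
    rw [div_le_iff₀ (hpos n)] at hD
    linarith

lemma summable_F11_norm (a : ℂ) {b : ℂ} (hb : ∀ k : ℕ, b ≠ -(k : ℂ)) (w : ℂ) :
    Summable (fun n : ℕ => ‖poch a n * w ^ n / (poch b n * n.factorial)‖) := by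
  obtain ⟨D, hD, hDle⟩ := poch_norm_lower hb
  refine Summable.of_nonneg_of_le (fun n => norm_nonneg _) (fun n => ?_)
    ((Real.summable_pow_div_factorial (2 * (‖a‖ + 1) * ‖w‖)).mul_left D)
  have hp : 0 < ‖poch b n‖ := norm_pos_iff.mpr (poch_ne_zero hb n)
  have hF : (0:ℝ) < n.factorial := by exact_mod_cast n.factorial_pos
  rw [norm_div, norm_mul, norm_mul, norm_pow, Complex.norm_natCast]
  rw [div_le_iff₀ (by positivity)]
  calc ‖poch a n‖ * ‖w‖ ^ n
      ≤ ((‖a‖ + 1) ^ n * n.factorial) * ‖w‖ ^ n :=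
        mul_le_mul_of_nonneg_right (poch_norm_le a n) (pow_nonneg (norm_nonneg w) n)
    _ ≤ ((‖a‖ + 1) ^ n * (D * (2 ^ n * ‖poch b n‖))) * ‖w‖ ^ n := by
        gcongr
        exact hDle n
    _ = D * ((2 * (‖a‖ + 1) * ‖w‖) ^ n / n.factorial) * (‖poch b n‖ * n.factorial) := by
        rw [mul_pow, mul_pow]
        field_simp

lemma summable_F01_norm {c : ℂ} (hc : ∀ k : ℕ, c ≠ -(k : ℂ)) (w : ℂ) :
    Summable (fun k : ℕ => ‖w ^ k / (poch c k * k.factorial)‖) := by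
  obtain ⟨D, hD, hDle⟩ := poch_norm_lower hc
  refine Summable.of_nonneg_of_le (fun n => norm_nonneg _) (fun n => ?_)
    ((Real.summable_pow_div_factorial (2 * ‖w‖)).mul_left D)
  have hp : 0 < ‖poch c n‖ := norm_pos_iff.mpr (poch_ne_zero hc n)
  have hF : (1:ℝ) ≤ n.factorial := by exact_mod_cast n.factorial_pos
  rw [norm_div, norm_mul, norm_pow, Complex.norm_natCast]
  rw [div_le_iff₀ (by positivity)]
  calc ‖w‖ ^ n = ‖w‖ ^ n * 1 := (mul_one _).symm
    _ ≤ ‖w‖ ^ n * (D * (2 ^ n * ‖poch c n‖)) := by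
        gcongr
        linarith [hDle n]
    _ = D * ((2 * ‖w‖) ^ n / n.factorial) * (‖poch c n‖ * n.factorial) := by
        rw [mul_pow]
        field_simp

noncomputable def Scoef (c : ℂ) (n : ℕ) : ℂ :=
  ∑ k ∈ range (n / 2 + 1),
    (2:ℂ) ^ (n - 2*k) / ((n - 2*k).factorial * (poch c k * k.factorial))

noncomputable def Rcoef (c : ℂ) (n : ℕ) : ℂ :=
  4 ^ n * poch (c - 1/2) n / (poch (2*c - 1) n * n.factorial)

lemma step1 (m : ℕ) (P : ℂ) :
    ((m + 1 : ℕ) : ℂ) * ((2:ℂ) ^ (m + 1) / (((m + 1).factorial : ℂ) * P))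
      = 2 * ((2:ℂ) ^ m / ((m.factorial : ℂ) * P)) := by
  rcases eq_or_ne P 0 with h | h
  · simp [h]
  · have hf : ((m.factorial : ℂ)) ≠ 0 := by exact_mod_cast m.factorial_ne_zero
    have hm : ((m : ℂ) + 1) ≠ 0 := by exact_mod_cast Nat.succ_ne_zero m
    rw [Nat.factorial_succ, pow_succ]
    push_cast
    field_simp

lemma step2 (c Q X F : ℂ) (j : ℕ) (hc : c ≠ 0) (hF : F ≠ 0) :
    ((2 * (j + 1) : ℕ) : ℂ) * (X / (F * (c * (Q * (((j + 1).factorial : ℕ) : ℂ)))))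
      = 2 / c * (X / (F * (Q * ((j.factorial : ℕ) : ℂ)))) := by
  rcases eq_or_ne Q 0 with h | h
  · simp [h]
  · have hf : ((j.factorial : ℂ)) ≠ 0 := by exact_mod_cast j.factorial_ne_zero
    have hj : ((j : ℂ) + 1) ≠ 0 := by exact_mod_cast Nat.succ_ne_zero j
    have hy : F * (Q * (j.factorial : ℂ)) ≠ 0 := by
      exact mul_ne_zero hF (mul_ne_zero h hf)
    rw [Nat.factorial_succ]
    push_cast
    have hd : F * (c * (Q * ((↑j + 1) * (j.factorial : ℂ))))
        = (c * ((j:ℂ) + 1)) * (F * (Q * (j.factorial : ℂ))) := by ring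
    rw [hd]
    field_simp

lemma Scoef_rec (c : ℂ) (hc0 : c ≠ 0) (n : ℕ) :
    ((n:ℂ) + 2) * Scoef c (n + 2) = 2 * Scoef c (n + 1) + (2 / c) * Scoef (c + 1) n := by
  have hrange : (n + 2) / 2 + 1 = n / 2 + 2 := by omega
  rw [Scoef, hrange, Finset.mul_sum]
  have hsplit : ∀ k ∈ range (n / 2 + 2),
      ((n:ℂ) + 2) * ((2:ℂ) ^ (n + 2 - 2*k) / ((n + 2 - 2*k).factorial * (poch c k * k.factorial)))
      = ((n + 2 - 2*k : ℕ) : ℂ) * ((2:ℂ) ^ (n + 2 - 2*k) / ((n + 2 - 2*k).factorial * (poch c k * k.factorial)))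
        + ((2*k : ℕ) : ℂ) * ((2:ℂ) ^ (n + 2 - 2*k) / ((n + 2 - 2*k).factorial * (poch c k * k.factorial))) := by
    intro k hk
    rw [mem_range] at hk
    have h2k : 2*k ≤ n + 2 := by omega
    rw [← add_mul]
    congr 1
    have hnk : (n + 2 - 2*k) + 2*k = n + 2 := by omega
    have h := congrArg (fun m : ℕ => (m : ℂ)) hnk
    push_cast at h ⊢
    linear_combination -h
  rw [Finset.sum_congr rfl hsplit, Finset.sum_add_distrib]
  congr 1
  · -- first part equals 2 * Scoef c (n+1)
    rw [Scoef, Finset.mul_sum]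
    have hsub : range ((n+1)/2 + 1) ⊆ range (n/2 + 2) := by
      apply Finset.range_subset_range.mpr; omega
    rw [← Finset.sum_subset hsub]
    · apply Finset.sum_congr rfl
      intro k hk
      rw [mem_range] at hk
      have h2k : 2*k ≤ n + 1 := by omega
      have e1 : n + 2 - 2*k = (n + 1 - 2*k) + 1 := by omega
      rw [e1]
      exact step1 (n + 1 - 2*k) (poch c k * k.factorial)
    · intro k hk hnk
      rw [mem_range] at hk
      rw [mem_range] at hnk
      have : n + 2 - 2*k = 0 := by omega
      rw [this]
      simp
  · -- second part equals (2/c) * Scoef (c+1) n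
    rw [Scoef, Finset.mul_sum, Finset.sum_range_succ']
    simp only [Nat.mul_zero, Nat.cast_zero, zero_mul, add_zero]
    apply Finset.sum_congr rfl
    intro j hj
    rw [mem_range] at hj
    have h2j : 2*j ≤ n := by omega
    have e1 : n + 2 - 2*(j+1) = n - 2*j := by omega
    rw [e1, poch_succ_left]
    have hF : (((n - 2*j).factorial : ℕ) : ℂ) ≠ 0 := by
      exact_mod_cast (n - 2*j).factorial_ne_zero
    rw [mul_assoc c]
    exact step2 c (poch (c+1) j) ((2:ℂ) ^ (n - 2*j)) ((n - 2*j).factorial : ℂ) j hc0 hF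

set_option maxHeartbeats 1000000 in
lemma Rcoef_rec (c : ℂ) (hc : ∀ k : ℕ, c ≠ -(k : ℂ)) (hc' : ∀ k : ℕ, 2*c - 1 ≠ -(k : ℂ))
    (n : ℕ) :
    ((n:ℂ) + 2) * Rcoef c (n + 2) = 2 * Rcoef c (n + 1) + (2 / c) * Rcoef (c + 1) n := by
  have hc0 : c ≠ 0 := by have := hc 0; simpa using this
  have hb0 : 2*c - 1 ≠ 0 := by have := hc' 0; simpa using this
  have hb1 : 2*c - 1 + 1 ≠ 0 := fun h => hc0 (by linear_combination h/2)
  have hbn1 : 2*c - 1 + (n:ℂ) + 1 ≠ 0 := fun h => hc' (n+1) (by push_cast; linear_combination h)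
  have hB1 : poch (2*c-1) (n+1) ≠ 0 := poch_ne_zero hc' (n+1)
  have hH : poch (2*c-1+1+1) n ≠ 0 := by
    refine poch_ne_zero (fun k h => hc' (k+2) ?_) n
    push_cast; linear_combination h
  have hfn1 : (((n+1).factorial : ℕ) : ℂ) ≠ 0 := by exact_mod_cast (n+1).factorial_ne_zero
  have hfn : ((n.factorial : ℕ) : ℂ) ≠ 0 := by exact_mod_cast n.factorial_ne_zero
  have hn1 : ((n:ℂ) + 1) ≠ 0 := by exact_mod_cast Nat.succ_ne_zero n
  have hn2 : ((n:ℂ) + 2) ≠ 0 := by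
    have h : ((n + 2 : ℕ) : ℂ) ≠ 0 := by exact_mod_cast Nat.succ_ne_zero (n+1)
    push_cast at h; exact h
  have e1 : c + 1 - 1/2 = (c - 1/2) + 1 := by ring
  have e2 : 2*(c+1) - 1 = (2*c - 1) + 1 + 1 := by ring
  -- step ratio for Rcoef c (n+2)
  have hV : Rcoef c (n+2)
      = Rcoef c (n+1) * (4*(c - 1/2 + (n:ℂ) + 1)) / ((2*c - 1 + (n:ℂ) + 1) * ((n:ℂ)+2)) := by
    rw [eq_div_iff (mul_ne_zero hbn1 hn2), Rcoef, Rcoef]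
    have hA : poch (c - 1/2) (n+2) = poch (c - 1/2) (n+1) * (c - 1/2 + (n:ℂ) + 1) := by
      rw [poch_succ]; push_cast; ring
    have hBs : poch (2*c-1) (n+2) = poch (2*c-1) (n+1) * (2*c - 1 + (n:ℂ) + 1) := by
      rw [poch_succ]; push_cast; ring
    rw [hA, hBs, show (n+2).factorial = (n+2) * (n+1).factorial from Nat.factorial_succ (n+1)]
    push_cast
    rw [div_mul_eq_mul_div, div_mul_eq_mul_div,
      div_eq_div_iff (by simp [hB1, hbn1, hn2, hfn1]) (by simp [hB1, hfn1])]
    ring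
  -- shift ratio for Rcoef (c+1) n
  have hU : Rcoef (c+1) n
      = Rcoef c (n+1) * (((n:ℂ)+1) * c) / (2*c - 1 + (n:ℂ) + 1) := by
    rw [eq_div_iff hbn1, Rcoef, Rcoef, e1, e2]
    have hA : poch (c - 1/2) (n+1) = (c - 1/2) * poch ((c - 1/2) + 1) n := poch_succ_left _ _
    have hrel : poch (2*c-1) (n+1) * (2*c - 1 + (n:ℂ) + 1)
        = (2*c-1) * ((2*c-1+1) * poch ((2*c-1)+1+1) n) := by
      have hx := poch_succ (2*c-1) (n+1)
      have hy : poch (2*c-1) (n+2) = (2*c-1) * ((2*c-1+1) * poch ((2*c-1)+1+1) n) := by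
        rw [poch_succ_left, poch_succ_left]
      rw [hy] at hx
      push_cast at hx
      linear_combination -hx
    rw [hA, show (n+1).factorial = (n+1) * n.factorial from Nat.factorial_succ n]
    push_cast
    rw [div_mul_eq_mul_div, div_mul_eq_mul_div,
      div_eq_div_iff (mul_ne_zero hH hfn) (mul_ne_zero hB1 (mul_ne_zero hn1 hfn))]
    linear_combination (4^n * poch ((c-1/2)+1) n * (((n:ℂ)+1) * (n.factorial:ℂ))) * hrel
  rw [hV, hU]
  field_simp
  ring

lemma Scoef_eq_Rcoef : ∀ (n : ℕ) (c : ℂ), (∀ k : ℕ, c ≠ -(k:ℂ)) → (∀ k : ℕ, 2*c - 1 ≠ -(k:ℂ)) →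
    Scoef c n = Rcoef c n := by
  intro n
  induction n using Nat.twoStepInduction with
  | zero =>
    intro c hc hc'
    simp [Scoef, Rcoef, poch_zero]
  | one =>
    intro c hc hc'
    have hb0 : 2*c - 1 ≠ 0 := by have := hc' 0; simpa using this
    have h1 : poch (c - 1/2) 1 = c - 1/2 := by
      rw [show poch (c - 1/2) 1 = poch (c - 1/2) (0+1) from rfl, poch_succ]; simp [poch_zero]
    have h2 : poch (2*c - 1) 1 = 2*c - 1 := by
      rw [show poch (2*c - 1) 1 = poch (2*c - 1) (0+1) from rfl, poch_succ]; simp [poch_zero]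
    rw [Rcoef, h1, h2]
    have hsc : Scoef c 1 = 2 := by
      simp [Scoef, poch_zero]
    rw [hsc]
    field_simp
    ring
  | more n ih ih1 =>
    intro c hc hc'
    have hc0 : c ≠ 0 := by have := hc 0; simpa using this
    have hc1 : ∀ k : ℕ, c + 1 ≠ -(k:ℂ) := fun k h => hc (k+1) (by push_cast; linear_combination h)
    have hc1' : ∀ k : ℕ, 2*(c+1) - 1 ≠ -(k:ℂ) := fun k h => hc' (k+2) (by push_cast; linear_combination h)
    have hS := Scoef_rec c hc0 n
    have hR := Rcoef_rec c hc hc' n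
    rw [ih1 c hc hc', ih (c+1) hc1 hc1'] at hS
    have hn2 : ((n:ℂ) + 2) ≠ 0 := by
      have h : ((n + 2 : ℕ) : ℂ) ≠ 0 := by exact_mod_cast Nat.succ_ne_zero (n+1)
      push_cast at h; exact h
    exact mul_left_cancel₀ hn2 (hS.trans hR.symm)

/-- The ₀F₁ function `F(c; z) = ∑ zⁿ/((c)ₙ·n!)`. -/
noncomputable def F01 (c z : ℂ) : ℂ := ∑' n : ℕ, z ^ n / (poch c n * n.factorial)

/-- The ₁F₁ (confluent) function `F(a; c; z) = ∑ (a)ₙ zⁿ/((c)ₙ·n!)`. -/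
noncomputable def F11 (a c z : ℂ) : ℂ := ∑' n : ℕ, poch a n * z ^ n / (poch c n * n.factorial)

lemma exp_summable_norm (w : ℂ) : Summable (fun i : ℕ => ‖w ^ i / (i.factorial : ℂ)‖) := by
  have h : (fun i : ℕ => ‖w ^ i / (i.factorial : ℂ)‖) = fun i : ℕ => ‖w‖ ^ i / i.factorial := by
    funext i
    rw [norm_div, norm_pow, Complex.norm_natCast]
  rw [h]
  exact Real.summable_pow_div_factorial ‖w‖

lemma key_product (c z : ℂ) (hc : ∀ k : ℕ, c ≠ -(k : ℂ)) (hc' : ∀ k : ℕ, 2*c - 1 ≠ -(k : ℂ)) :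
    Complex.exp (2*z) * F01 c (z^2) = F11 (c - 1/2) (2*c - 1) (4*z) := by
  classical
  set f : ℕ → ℂ := fun i => (2*z) ^ i / (i.factorial : ℂ) with hf
  set g : ℕ → ℂ := fun k => (z^2) ^ k / (poch c k * k.factorial) with hgdef
  have hsum1 : Summable fun i => ‖f i‖ := exp_summable_norm (2*z)
  have hsum2 : Summable fun k => ‖g k‖ := summable_F01_norm hc (z^2)
  have hexp : Complex.exp (2*z) = ∑' i : ℕ, f i := by
    rw [Complex.exp_eq_exp_ℂ, NormedSpace.exp_eq_tsum_div]
  have hprod : Complex.exp (2*z) * F01 c (z^2) = ∑' p : ℕ × ℕ, f p.1 * g p.2 := by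
    rw [hexp, F01]
    exact tsum_mul_tsum_of_summable_norm hsum1 hsum2
  -- reindex
  set h : ℕ × ℕ → ℂ := fun q =>
    if 2*q.2 ≤ q.1 then
      z ^ q.1 * ((2:ℂ) ^ (q.1 - 2*q.2) /
        (((q.1 - 2*q.2).factorial : ℂ) * (poch c q.2 * q.2.factorial)))
    else 0 with hh
  set e : ℕ × ℕ → ℕ × ℕ := fun p => (p.1 + 2*p.2, p.2) with he
  have hinj : Function.Injective e := by
    intro p q hpq
    rw [he] at hpq
    simp only [Prod.mk.injEq] at hpq
    obtain ⟨h1, h2⟩ := hpq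
    exact Prod.ext (by omega) h2
  have hcomp : ∀ p : ℕ × ℕ, h (e p) = f p.1 * g p.2 := by
    intro p
    rw [hh, he]
    simp only
    rw [if_pos (by omega), show p.1 + 2*p.2 - 2*p.2 = p.1 by omega]
    rw [hf, hgdef]
    simp only
    rw [pow_add, pow_mul]
    ring
  have hsupp : Function.support h ⊆ Set.range e := by
    intro q hq
    rw [Function.mem_support] at hq
    by_cases h2 : 2*q.2 ≤ q.1
    · exact ⟨(q.1 - 2*q.2, q.2), by rw [he]; simp only; exact Prod.ext (by omega) rfl⟩
    · exact absurd (by rw [hh]; simp only; rw [if_neg h2]) hq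
  have htsum_eq : ∑' p : ℕ × ℕ, f p.1 * g p.2 = ∑' q : ℕ × ℕ, h q := by
    rw [← hinj.tsum_eq hsupp]
    exact tsum_congr (fun p => (hcomp p).symm)
  have hsummable : Summable h := by
    rw [← hinj.summable_iff (fun x hx => Function.notMem_support.mp (fun hs => hx (hsupp hs)))]
    have : h ∘ e = fun p : ℕ × ℕ => f p.1 * g p.2 := funext hcomp
    rw [this]
    exact summable_mul_of_summable_norm hsum1 hsum2
  have hfiber : ∀ n : ℕ, ∑' k : ℕ, h (n, k) = z ^ n * Scoef c n := by
    intro n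
    rw [Scoef, Finset.mul_sum]
    rw [tsum_eq_sum (s := Finset.range (n/2 + 1)) (fun k hk => by
      rw [Finset.mem_range] at hk
      rw [hh]; simp only
      rw [if_neg (by omega)])]
    apply Finset.sum_congr rfl
    intro k hk
    rw [Finset.mem_range] at hk
    rw [hh]
    simp only
    rw [if_pos (by omega)]
  calc Complex.exp (2*z) * F01 c (z^2) = ∑' q : ℕ × ℕ, h q := by rw [hprod, htsum_eq]
    _ = ∑' (n : ℕ) (k : ℕ), h (n, k) := Summable.tsum_prod' hsummable (fun n => hsummable.prod_factor n)
    _ = ∑' n : ℕ, z ^ n * Scoef c n := tsum_congr hfiber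
    _ = F11 (c - 1/2) (2*c - 1) (4*z) := by
        rw [F11]
        apply tsum_congr
        intro n
        rw [Scoef_eq_Rcoef n c hc hc', Rcoef]
        rw [mul_pow]
        ring

theorem quadratic_relation_0F1_1F1 (c z : ℂ)
    (hc : ∀ k : ℕ, c ≠ -(k : ℂ)) (hc' : ∀ k : ℕ, 2 * c - 1 ≠ -(k : ℂ)) :
    F01 c (z ^ 2) = Complex.exp (-2 * z) * F11 (c - 1 / 2) (2 * c - 1) (4 * z) := by
  have key := key_product c z hc hc'
  have h1 : Complex.exp (-2 * z) * Complex.exp (2 * z) = 1 := by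
    rw [← Complex.exp_add, show -2 * z + 2 * z = 0 by ring, Complex.exp_zero]
  calc F01 c (z ^ 2) = (Complex.exp (-2 * z) * Complex.exp (2 * z)) * F01 c (z ^ 2) := by
        rw [h1, one_mul]
    _ = Complex.exp (-2 * z) * (Complex.exp (2 * z) * F01 c (z ^ 2)) := by ring
    _ = Complex.exp (-2 * z) * F11 (c - 1 / 2) (2 * c - 1) (4 * z) := by rw [key]
end

section
/- The derivative of the reciprocal Gamma function at a nonpositive integer −n equals (−1)^n · n!, i.e. d/dz (1/Γ(z)) evaluated at z = −n is (−1)^n n! for n = 0, 1, 2, …. -/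
open Complex

open Real in
theorem deriv_one_div_Gamma_neg_nat (n : ℕ) :
    deriv (fun z : ℂ => (Complex.Gamma z)⁻¹) (-(n : ℂ)) = (-1) ^ n * n.factorial := by
  have hπ : (π : ℂ) ≠ 0 := Complex.ofReal_ne_zero.mpr Real.pi_ne_zero
  -- eventual equality with z ↦ sin (π z) * Γ (1 - z) / π
  have heq : (fun z : ℂ => (Complex.Gamma z)⁻¹) =ᶠ[nhds (-(n : ℂ))]
      fun z : ℂ => Complex.sin (π * z) * Complex.Gamma (1 - z) / π := by
    rw [Filter.eventuallyEq_iff_exists_mem]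
    refine ⟨Metric.ball (-(n : ℂ)) 1, Metric.ball_mem_nhds _ one_pos, fun z hz => ?_⟩
    by_cases hzn : z = -(n : ℂ)
    · subst hzn
      have hs0 : Complex.sin (π * -(n:ℂ)) = 0 := by
        rw [Complex.sin_eq_zero_iff]; exact ⟨-n, by push_cast; ring⟩
      simp only [Complex.Gamma_neg_nat_eq_zero, inv_zero, hs0, zero_mul, zero_div]
    · have hsin : Complex.sin (π * z) ≠ 0 := by
        rw [Ne, Complex.sin_eq_zero_iff]
        rintro ⟨k, hk⟩
        have hzk : z = (k : ℂ) := by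
          have h2 : (π:ℂ) * z = (π:ℂ) * k := by rw [hk]; ring
          exact mul_left_cancel₀ hπ h2
        subst hzk
        have hcast : ((k : ℂ) - (-(n:ℂ))) = ((k + n : ℤ) : ℂ) := by push_cast; ring
        have hd : dist (k : ℂ) (-(n : ℂ)) < 1 := hz
        rw [Complex.dist_eq, hcast] at hd
        have h1 : (1:ℝ) ≤ ‖((k + n : ℤ) : ℂ)‖ := by
          rw [Complex.norm_intCast]
          have hne : k + n ≠ 0 := by
            intro h0
            apply hzn
            have : (k : ℤ) = -n := by omega
            rw [this]; push_cast; ring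
          exact_mod_cast Int.one_le_abs hne
        linarith
      have hΓ : Complex.Gamma z ≠ 0 := by
        apply Complex.Gamma_ne_zero
        intro m hm
        apply hsin
        rw [hm, Complex.sin_eq_zero_iff]
        exact ⟨-m, by push_cast; ring⟩
      have key := Complex.Gamma_mul_Gamma_one_sub z
      field_simp at key ⊢
      rw [eq_div_iff (by rwa [mul_comm] at hsin)] at key
      linear_combination -key
  rw [heq.deriv_eq]
  -- now compute the derivative
  have hdsin : HasDerivAt (fun z : ℂ => Complex.sin (π * z))
      (π * Complex.cos (π * -(n:ℂ))) (-(n:ℂ)) := by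
    have h0 : HasDerivAt (fun z : ℂ => (π:ℂ) * z) (π:ℂ) (-(n:ℂ)) := by
      simpa using (hasDerivAt_id (-(n:ℂ))).const_mul (π : ℂ)
    have := (Complex.hasDerivAt_sin ((π:ℂ) * -(n:ℂ))).comp (-(n:ℂ)) h0
    simpa [Function.comp_def, mul_comm (Complex.cos _)] using this
  have hdΓ : HasDerivAt (fun z : ℂ => Complex.Gamma (1 - z))
      (-deriv Complex.Gamma (1 + n)) (-(n:ℂ)) := by
    have h1 : DifferentiableAt ℂ Complex.Gamma (1 - -(n:ℂ)) := by
      apply Complex.differentiableAt_Gamma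
      intro m h
      rw [sub_neg_eq_add] at h
      have h2 : (1 + n : ℝ) = -(m : ℝ) := by exact_mod_cast h
      have hm : (0:ℝ) ≤ (m:ℝ) := Nat.cast_nonneg m
      have hn : (0:ℝ) ≤ (n:ℝ) := Nat.cast_nonneg n
      linarith
    have := h1.hasDerivAt.comp (-(n:ℂ)) ((hasDerivAt_id (-(n:ℂ))).const_sub 1)
    simpa [sub_neg_eq_add, Function.comp_def] using this
  have hd := (hdsin.mul hdΓ).div_const (π : ℂ)
  rw [show deriv (fun z : ℂ => Complex.sin (π * z) * Complex.Gamma (1 - z) / π) (-(n:ℂ)) = _ from hd.deriv]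
  have hsin0 : Complex.sin (π * -(n:ℂ)) = 0 := by
    rw [Complex.sin_eq_zero_iff]; exact ⟨-n, by push_cast; ring⟩
  have hcos : Complex.cos (π * -(n:ℂ)) = (-1) ^ n := by
    have h3 : (π:ℂ) * -(n:ℂ) = ((0 + (-n : ℤ) * π : ℝ) : ℂ) := by push_cast; ring
    rw [h3, ← Complex.ofReal_cos, Real.cos_add_int_mul_pi]
    push_cast
    simp only [Real.cos_zero, mul_one, zpow_neg, zpow_natCast, Complex.ofReal_inv,
      Complex.ofReal_pow, Complex.ofReal_neg, Complex.ofReal_one, inv_pow, inv_neg, inv_one]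
    rw [Complex.cos_zero, mul_one]
    rw [← inv_pow, inv_neg, inv_one]
  have hΓval : Complex.Gamma (1 - -(n:ℂ)) = n.factorial := by
    rw [sub_neg_eq_add, add_comm]
    exact_mod_cast Complex.Gamma_nat_eq_factorial n
  rw [hsin0, hΓval, hcos]
  field_simp
  ring
end
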